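/- arXiv:2106.09205 — 6 statements merged into one kernel-verified Lean document; each statement's English description precedes it below -/
import Mathlib

section
/- For any Hermitian matrix A of size km × km, the (k,m)-characteristic polynomial ψ_{k,m}[A](x) equals (1/(k!)^m) · ∏_{i=1}^m ∂_{z_i}^{k-1} det[Z_k − A] evaluated at z_1 = ... = z_m = x, where Z_k = diag(z,...,z) (k copies) with z = (z_1,...,z_m). -/
open MvPolynomial Polynomial Finset

set_option linter.unusedSectionVars false
set_option linter.unusedVariables false
set_option maxHeartbeats 1000000




section DetExpand

variable {n : Type*} [DecidableEq n] [Fintype n] {R : Type*} [CommRing R]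

lemma det_piecewise_one (s : Finset n) (B : Matrix n n R) :
    Matrix.det (Matrix.of (s.piecewise (1 : Matrix n n R) (B : Matrix n n R))) =
      Matrix.det (B.submatrix (Subtype.val : {x // x ∉ s} → n) Subtype.val) := by
  classical
  set M : Matrix n n R := Matrix.of (s.piecewise (1 : Matrix n n R) B) with hM
  let e : {x // x ∈ s} ⊕ {x // x ∉ s} ≃ n := Equiv.sumCompl (· ∈ s)
  have h1 : M.submatrix e e =
      Matrix.fromBlocks 1 0
        (B.submatrix (Subtype.val : {x // x ∉ s} → n) (Subtype.val : {x // x ∈ s} → n))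
        (B.submatrix (Subtype.val : {x // x ∉ s} → n) Subtype.val) := by
    ext p q
    rcases p with a | a <;> rcases q with b | b <;>
      simp only [Matrix.submatrix_apply, e, Equiv.sumCompl_apply_inl, Equiv.sumCompl_apply_inr,
        Matrix.fromBlocks_apply₁₁, Matrix.fromBlocks_apply₁₂, Matrix.fromBlocks_apply₂₁,
        Matrix.fromBlocks_apply₂₂, hM, Matrix.of_apply]
    · simp only [Finset.piecewise, if_pos a.2]
      by_cases hab : a = b
      · subst hab; simp [Matrix.one_apply]
      · rw [Matrix.one_apply_ne, Matrix.one_apply_ne hab]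
        exact fun h => hab (Subtype.ext h)
    · simp only [Finset.piecewise, if_pos a.2]
      rw [Matrix.one_apply_ne, Matrix.zero_apply]
      exact fun h => b.2 (h ▸ a.2)
    · simp only [Finset.piecewise, if_neg a.2]
    · simp only [Finset.piecewise, if_neg a.2]
  calc M.det = (M.submatrix e e).det := (Matrix.det_submatrix_equiv_self e M).symm
    _ = _ := by rw [h1, Matrix.det_fromBlocks_zero₁₂, Matrix.det_one, one_mul]

lemma det_diagonal_add (d : n → R) (B : Matrix n n R) :
    (Matrix.diagonal d + B).det
      = ∑ s : Finset n, (∏ p ∈ s, d p) *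
          (B.submatrix (Subtype.val : {x // x ∉ s} → n) Subtype.val).det := by
  classical
  set f := (Matrix.detRowAlternating (R := R) (n := n)).toMultilinearMap with hf
  have hdet : ∀ M : Matrix n n R, M.det = f M := fun _ => rfl
  have h0 : (Matrix.diagonal d + B : Matrix n n R) =
      ((fun i => Matrix.diagonal d i) + fun i => B i : n → n → R) := by
    funext i j; exact Matrix.add_apply _ _ _ _
  rw [hdet, h0, f.map_add_univ]
  refine Finset.sum_congr rfl fun s _ => ?_
  have h2 : s.piecewise (fun i => Matrix.diagonal d i) (fun i => B i) =
      s.piecewise (fun i => d i • (s.piecewise (1 : Matrix n n R) B) i)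
        (s.piecewise (1 : Matrix n n R) B) := by
    ext i j
    by_cases hi : i ∈ s
    · rw [Finset.piecewise_eq_of_mem _ _ _ hi, Finset.piecewise_eq_of_mem _ _ _ hi]
      simp only [Pi.smul_apply, Finset.piecewise_eq_of_mem _ _ _ hi]
      simp [Matrix.diagonal_apply, Matrix.one_apply, mul_ite, Finset.piecewise, hi]
    · rw [Finset.piecewise_eq_of_notMem _ _ _ hi, Finset.piecewise_eq_of_notMem _ _ _ hi]
      simp only [Finset.piecewise, if_neg hi]
  rw [h2, f.map_piecewise_smul, smul_eq_mul]
  congr 1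
  exact (hdet _).symm.trans (det_piecewise_one s B)

end DetExpand




section Pderiv

variable {σ : Type*} [DecidableEq σ] {R : Type*} [CommRing R]

lemma iter_pderiv_monomial (i : σ) (j : ℕ) (a : σ →₀ ℕ) (c : R) :
    (fun q => pderiv i q)^[j] (monomial a c)
      = monomial (a - Finsupp.single i j) (c * (a i).descFactorial j) := by
  induction j generalizing a c with
  | zero => simp
  | succ j ih =>
    rw [Function.iterate_succ_apply]
    simp only [pderiv_monomial]
    rw [ih]
    have he : a - Finsupp.single i 1 - Finsupp.single i j = a - Finsupp.single i (j + 1) := by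
      rw [tsub_tsub, ← Finsupp.single_add, add_comm]
    have hv : ((a - Finsupp.single i 1 : σ →₀ ℕ)) i = a i - 1 := by
      rw [Finsupp.tsub_apply, Finsupp.single_eq_same]
    rw [he, hv]
    congr 1
    cases h : a i with
    | zero => simp [Nat.zero_descFactorial_succ]
    | succ nn =>
      rw [Nat.succ_sub_one, Nat.succ_descFactorial_succ]
      push_cast
      ring

lemma list_sum_single_apply (j : ℕ) (l : List σ) (i : σ) (hi : i ∉ l) :
    ((l.map fun i' => Finsupp.single i' j).sum) i = 0 := by
  induction l with
  | nil => simp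
  | cons b l ih =>
    simp only [List.map_cons, List.sum_cons, Finsupp.add_apply]
    rw [Finsupp.single_apply, if_neg (by rintro rfl; exact hi List.mem_cons_self),
      ih fun h => hi (List.mem_cons_of_mem _ h), add_zero]

lemma foldr_iter_pderiv_monomial (jj : ℕ) (l : List σ) (hl : l.Nodup) (a : σ →₀ ℕ) (c : R) :
    l.foldr (fun i p => (fun q => pderiv i q)^[jj] p) (monomial a c)
      = monomial (a - (l.map fun i' => Finsupp.single i' jj).sum)
          (c * ((l.map fun i' => ((a i').descFactorial jj : R)).prod)) := by
  induction l with
  | nil => simp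
  | cons i l ih =>
    have hi : i ∉ l := (List.nodup_cons.mp hl).1
    rw [List.foldr_cons, ih (List.nodup_cons.mp hl).2, iter_pderiv_monomial]
    congr 1
    · rw [tsub_tsub]
      congr 1
      rw [List.map_cons, List.sum_cons, add_comm]
    · rw [Finsupp.tsub_apply, list_sum_single_apply jj l i hi, Nat.sub_zero,
        List.map_cons, List.prod_cons]
      ring

lemma iter_pderiv_sum (i : σ) (jj : ℕ) {ι : Type*} (s : Finset ι)
    (P : ι → MvPolynomial σ R) :
    (fun q => pderiv i q)^[jj] (∑ x ∈ s, P x) = ∑ x ∈ s, (fun q => pderiv i q)^[jj] (P x) := by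
  induction jj generalizing P with
  | zero => simp
  | succ jj ih =>
    rw [Function.iterate_succ_apply]
    simp only [map_sum]
    exact ih _

lemma foldr_iter_pderiv_sum (jj : ℕ) (l : List σ) {ι : Type*} (s : Finset ι)
    (P : ι → MvPolynomial σ R) :
    l.foldr (fun i p => (fun q => pderiv i q)^[jj] p) (∑ x ∈ s, P x)
      = ∑ x ∈ s, l.foldr (fun i p => (fun q => pderiv i q)^[jj] p) (P x) := by
  induction l generalizing P with
  | nil => simp
  | cons i l ih =>
    rw [List.foldr_cons, ih, iter_pderiv_sum]
    rfl

lemma aeval_X_monomial {m : ℕ} (b : Fin m →₀ ℕ) (c : ℂ) :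
    aeval (fun _ : Fin m => (Polynomial.X : Polynomial ℂ)) (monomial b c)
      = Polynomial.C c * Polynomial.X ^ (∑ i, b i) := by
  rw [MvPolynomial.aeval_monomial, Finsupp.prod_pow, Finset.prod_pow_eq_pow_sum]
  rfl

end Pderiv




namespace PsiAux

variable {k m : ℕ}

/-- columns where `h` is `none` -/
def tset (h : Fin m → Option (Fin k)) : Finset (Fin m) :=
  Finset.univ.filter fun i => h i = none

/-- the subset of `Fin k × Fin m` whose complement is the partial transversal given by `h` -/
def sset (h : Fin m → Option (Fin k)) : Finset (Fin k × Fin m) :=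
  Finset.univ.filter fun p => h p.2 ≠ some p.1

/-- column counts of a subset -/
noncomputable def acard (s : Finset (Fin k × Fin m)) : Fin m →₀ ℕ :=
  Finsupp.equivFunOnFinite.symm fun i => (s.filter fun p => p.2 = i).card

def phi (g : Fin m → Fin k) (t : Finset (Fin m)) : Fin m → Option (Fin k) :=
  fun i => if i ∈ t then none else some (g i)

lemma acard_apply (s : Finset (Fin k × Fin m)) (i : Fin m) :
    acard s i = (s.filter fun p => p.2 = i).card := rfl

lemma card_filter_snd (s : Finset (Fin k × Fin m)) (i : Fin m) :
    (s.filter fun p => p.2 = i).card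
      + (Finset.univ.filter fun j : Fin k => (j, i) ∉ s).card = k := by
  have himg : s.filter (fun p => p.2 = i)
      = (Finset.univ.filter fun j : Fin k => (j, i) ∈ s).image fun j => (j, i) := by
    ext ⟨j', i'⟩
    simp only [mem_filter, mem_image, mem_univ, true_and]
    constructor
    · rintro ⟨hs, rfl⟩; exact ⟨j', hs, rfl⟩
    · rintro ⟨j, hj, hji⟩
      obtain ⟨rfl, rfl⟩ := Prod.mk.injEq .. ▸ hji
      exact ⟨hj, rfl⟩
  rw [himg, Finset.card_image_of_injective _ (fun a b hab => (Prod.mk.injEq .. ▸ hab).1),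
    Finset.card_filter_add_card_filter_not, Finset.card_univ, Fintype.card_fin]

lemma acard_sset (hk : 0 < k) (h : Fin m → Option (Fin k)) (i : Fin m) :
    acard (sset h) i = if h i = none then k else k - 1 := by
  have h1 := card_filter_snd (sset h) i
  rw [acard_apply]
  have h2 : (Finset.univ.filter fun j : Fin k => (j, i) ∉ sset h)
      = Finset.univ.filter fun j : Fin k => h i = some j := by
    ext j
    simp [sset]
  rw [h2] at h1
  cases hcase : h i with
  | none =>
    have : (Finset.univ.filter fun j : Fin k => h i = some j) = ∅ := by
      ext j; simp [hcase]
    rw [this] at h1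
    simpa using h1
  | some j0 =>
    have : (Finset.univ.filter fun j : Fin k => h i = some j) = {j0} := by
      ext j; simp [hcase, eq_comm]
    rw [this] at h1
    simp only [Finset.card_singleton] at h1
    simp only [reduceCtorEq, if_false]
    omega

lemma sset_injective : Function.Injective (sset (k := k) (m := m)) := by
  intro h h' hss
  funext i
  have key : ∀ j : Fin k, h i = some j ↔ h' i = some j := by
    intro j
    have := Finset.ext_iff.mp hss (j, i)
    simp only [sset, mem_filter, mem_univ, true_and, not_iff_not] at this
    tauto
  cases hh : h i with
  | none =>
    cases hh' : h' i with
    | none => rfl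
    | some j => exact absurd ((key j).mpr hh') (by simp [hh])
  | some j => exact ((key j).mp hh).symm

lemma exists_sset (hk : 0 < k) (s : Finset (Fin k × Fin m))
    (hs : ∀ i, k - 1 ≤ acard s i) : ∃ h : Fin m → Option (Fin k), sset h = s := by
  classical
  refine ⟨fun i => if hp : ∃ j, (j, i) ∉ s then some hp.choose else none, ?_⟩
  have hcard : ∀ i, (Finset.univ.filter fun j : Fin k => (j, i) ∉ s).card ≤ 1 := by
    intro i
    have h1 := card_filter_snd s i
    have h2 := hs i
    rw [acard_apply] at h2
    omega
  ext ⟨j, i⟩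
  simp only [sset, mem_filter, mem_univ, true_and]
  by_cases hp : ∃ j', (j', i) ∉ s
  · rw [dif_pos hp]
    have hj0 : (hp.choose, i) ∉ s := hp.choose_spec
    constructor
    · intro hne
      by_contra hmem
      have hj1 : j ∈ Finset.univ.filter fun j' : Fin k => (j', i) ∉ s := by
        simp [hmem]
      have hj2 : hp.choose ∈ Finset.univ.filter fun j' : Fin k => (j', i) ∉ s := by
        simp [hj0]
      have := Finset.card_le_one.mp (hcard i) _ hj1 _ hj2
      exact hne (by rw [this])
    · intro hmem hsome
      rw [Option.some_inj] at hsome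
      rw [hsome] at hj0
      exact hj0 hmem
  · rw [dif_neg hp]
    push_neg at hp
    simp [hp j]

lemma tset_phi (g : Fin m → Fin k) (t : Finset (Fin m)) : tset (phi g t) = t := by
  ext i
  simp only [tset, phi, mem_filter, mem_univ, true_and]
  by_cases hi : i ∈ t <;> simp [hi]

lemma phi_surj (hk : 0 < k) (h : Fin m → Option (Fin k)) :
    phi (fun i => (h i).getD ⟨0, hk⟩) (tset h) = h := by
  funext i
  simp only [phi, tset, mem_filter, mem_univ, true_and]
  cases hh : h i with
  | none => simp [hh]
  | some j => simp [hh]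

lemma fiber_card (hk : 0 < k) (h : Fin m → Option (Fin k)) :
    (Finset.univ.filter fun p : (Fin m → Fin k) × Finset (Fin m) => phi p.1 p.2 = h).card
      = k ^ (tset h).card := by
  classical
  have hset : (Finset.univ.filter fun p : (Fin m → Fin k) × Finset (Fin m) => phi p.1 p.2 = h)
      = (Fintype.piFinset fun i => (h i).elim Finset.univ fun j => ({j} : Finset (Fin k)))
          ×ˢ ({tset h} : Finset (Finset (Fin m))) := by
    ext ⟨g, t⟩
    simp only [mem_filter, mem_univ, true_and, Finset.mem_product, Fintype.mem_piFinset,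
      Finset.mem_singleton]
    constructor
    · rintro rfl
      refine ⟨fun i => ?_, (tset_phi g t).symm⟩
      cases hpt : phi g t i with
      | none => simp [hpt]
      | some j =>
        simp only [hpt, Option.elim_some, Finset.mem_singleton]
        simp only [phi] at hpt
        by_cases hi : i ∈ t
        · simp [hi] at hpt
        · simp only [hi, if_false, Option.some_inj] at hpt
          exact hpt
    · rintro ⟨hg, rfl⟩
      funext i
      simp only [phi, tset, mem_filter, mem_univ, true_and]
      cases hh : h i with
      | none => simp [hh]
      | some j =>
        have := hg i
        rw [hh] at this
        simp only [Option.elim_some, Finset.mem_singleton] at this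
        simp [hh, this]
  rw [hset, Finset.card_product, Finset.card_singleton, mul_one, Fintype.card_piFinset]
  have hprod : ∀ i, ((h i).elim Finset.univ fun j => ({j} : Finset (Fin k))).card
      = if h i = none then k else 1 := by
    intro i
    cases hh : h i with
    | none => simp
    | some j => simp
  calc ∏ i, ((h i).elim Finset.univ fun j => ({j} : Finset (Fin k))).card
      = ∏ i, if h i = none then k else 1 := Finset.prod_congr rfl fun i _ => hprod i
    _ = k ^ (tset h).card := by
        rw [← Finset.prod_filter_mul_prod_filter_not Finset.univ (fun i => h i = none)]
        rw [Finset.prod_congr rfl (fun i hi => if_pos (Finset.mem_filter.mp hi).2),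
          Finset.prod_congr rfl
            (fun i hi => if_neg (Finset.mem_filter.mp hi).2 : ∀ i ∈ Finset.univ.filter
              (fun i => ¬ h i = none), (if h i = none then k else 1) = 1)]
        rw [Finset.prod_const, Finset.prod_const, one_pow, mul_one]
        rfl

end PsiAux




namespace PsiAux

variable {k m : ℕ}

lemma desc_k_pred (k : ℕ) : k.descFactorial (k - 1) = k.factorial := by
  cases k with
  | zero => rfl
  | succ n =>
    have h1 : (n+1).descFactorial (n+1) = ((n+1) - n) * (n+1).descFactorial n :=
      Nat.descFactorial_succ _ _
    rw [Nat.descFactorial_self] at h1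
    have h2 : n + 1 - n = 1 := by omega
    rw [h2, one_mul] at h1
    exact h1.symm

lemma prod_X_eq_monomial (s : Finset (Fin k × Fin m)) :
    (∏ p ∈ s, (X p.2 : MvPolynomial (Fin m) ℂ)) = monomial (acard s) 1 := by
  rw [monomial_eq, MvPolynomial.C_1, one_mul, Finsupp.prod_pow]
  rw [← Finset.prod_fiberwise s (fun p => p.2) (fun p => (X p.2 : MvPolynomial (Fin m) ℂ))]
  refine Finset.prod_congr rfl fun i _ => ?_
  rw [Finset.prod_congr rfl (fun p hp => by rw [(Finset.mem_filter.mp hp).2] :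
        ∀ p ∈ s.filter fun p => p.2 = i, (X p.2 : MvPolynomial (Fin m) ℂ) = X i),
    Finset.prod_const]
  rfl

lemma sub_S_apply (a : Fin m →₀ ℕ) (j : ℕ) (i : Fin m) :
    ((a - ((List.finRange m).map fun i' => Finsupp.single i' j).sum : Fin m →₀ ℕ)) i
      = a i - j := by
  rw [Finsupp.tsub_apply]
  congr 1
  rw [← Fin.sum_univ_def fun i' => Finsupp.single i' j]
  rw [Finset.sum_apply']
  rw [Finset.sum_eq_single i (fun b _ hb => Finsupp.single_eq_of_ne' hb) (by simp),
    Finsupp.single_eq_same]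

end PsiAux

namespace PsiAux

variable {k m : ℕ}

noncomputable def detn (A : Matrix (Fin k × Fin m) (Fin k × Fin m) ℂ)
    (s : Finset (Fin k × Fin m)) : ℂ :=
  ((-A).submatrix (Subtype.val : {x // x ∉ s} → (Fin k × Fin m)) Subtype.val).det

noncomputable def detm (A : Matrix (Fin k × Fin m) (Fin k × Fin m) ℂ)
    (d : Fin k) (h : Fin m → Option (Fin k)) : ℂ :=
  ((-A).submatrix (fun i : {x : Fin m // x ∉ tset h} => ((h i.1).getD d, i.1))
      (fun i : {x : Fin m // x ∉ tset h} => ((h i.1).getD d, i.1))).det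

noncomputable def G (A : Matrix (Fin k × Fin m) (Fin k × Fin m) ℂ)
    (d : Fin k) (h : Fin m → Option (Fin k)) : Polynomial ℂ :=
  Polynomial.X ^ (tset h).card * Polynomial.C (detm A d h)

lemma mem_tset_iff (h : Fin m → Option (Fin k)) (i : Fin m) :
    i ∈ tset h ↔ h i = none := by simp [tset]

lemma mem_sset_iff (h : Fin m → Option (Fin k)) (p : Fin k × Fin m) :
    p ∈ sset h ↔ h p.2 ≠ some p.1 := by simp [sset]

lemma detn_sset (A : Matrix (Fin k × Fin m) (Fin k × Fin m) ℂ) (d : Fin k)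
    (h : Fin m → Option (Fin k)) : detn A (sset h) = detm A d h := by
  classical
  have hmem : ∀ p : Fin k × Fin m, p ∉ sset h ↔ h p.2 = some p.1 := by
    intro p; simp [sset]
  have hmt : ∀ i : Fin m, i ∉ tset h ↔ h i ≠ none := by
    intro i; simp [tset]
  let e : {x : Fin m // x ∉ tset h} ≃ {p : Fin k × Fin m // p ∉ sset h} :=
  { toFun := fun i => ⟨((h i.1).getD d, i.1), by
      rw [hmem]
      rcases hh : h i.1 with _ | j
      · exact absurd hh ((hmt i.1).mp i.2)
      · simp [hh]⟩
    invFun := fun p => ⟨p.1.2, (hmt p.1.2).mpr (by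
      rw [(hmem p.1).mp p.2]; exact Option.some_ne_none _)⟩
    left_inv := fun i => Subtype.ext rfl
    right_inv := fun p => Subtype.ext (by
      have hx := (hmem p.1).mp p.2
      rw [Prod.ext_iff]
      exact ⟨by simp [hx], rfl⟩) }
  rw [detn, ← Matrix.det_submatrix_equiv_self e, Matrix.submatrix_submatrix]
  rfl

lemma term_eq_G (A : Matrix (Fin k × Fin m) (Fin k × Fin m) ℂ) (d : Fin k)
    (g : Fin m → Fin k) (t : Finset (Fin m)) :
    Polynomial.X ^ t.card * Polynomial.C
        (((-A).submatrix (fun i : {x : Fin m // x ∉ t} => (g i.1, i.1))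
          (fun i : {x : Fin m // x ∉ t} => (g i.1, i.1))).det)
      = G A d (phi g t) := by
  have hfun : (fun i : {x : Fin m // x ∉ t} => ((phi g t i.1).getD d, i.1))
      = fun i : {x : Fin m // x ∉ t} => (g i.1, i.1) := by
    funext i
    simp [phi, i.2]
  rw [G, detm, tset_phi, hfun]

lemma aeval_foldr_term (k m : ℕ) (s : Finset (Fin k × Fin m)) (c : ℂ) :
    aeval (fun _ : Fin m => (Polynomial.X : Polynomial ℂ))
      ((List.finRange m).foldr (fun i p => (fun q => MvPolynomial.pderiv i q)^[k - 1] p)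
        ((∏ p ∈ s, (X p.2 : MvPolynomial (Fin m) ℂ)) * MvPolynomial.C c))
    = Polynomial.C (c * ∏ i : Fin m, ((acard s i).descFactorial (k-1) : ℂ))
        * Polynomial.X ^ (∑ i : Fin m, (acard s i - (k-1))) := by
  rw [prod_X_eq_monomial,
    show (monomial (acard s) (1:ℂ)) * MvPolynomial.C c = monomial (acard s) c by
      rw [MvPolynomial.C_apply, monomial_mul, add_zero, one_mul]]
  rw [foldr_iter_pderiv_monomial _ _ (List.nodup_finRange m), aeval_X_monomial]
  rw [show ((List.finRange m).map fun i' => ((acard s i').descFactorial (k-1) : ℂ)).prod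
      = ∏ i : Fin m, ((acard s i).descFactorial (k-1) : ℂ) from (Fin.prod_univ_def _).symm]
  congr 1
  exact congrArg (fun e => Polynomial.X ^ e)
    (Finset.sum_congr rfl fun i _ => sub_S_apply (acard s) (k-1) i)

lemma per_h (hk : 0 < k) (A : Matrix (Fin k × Fin m) (Fin k × Fin m) ℂ)
    (h : Fin m → Option (Fin k)) :
    ((k:ℂ) ^ m)⁻¹ • ((k ^ (tset h).card) • G A ⟨0, hk⟩ h)
      = ((k.factorial : ℂ) ^ m)⁻¹ •
          (Polynomial.C (detn A (sset h)
              * ∏ i : Fin m, ((acard (sset h) i).descFactorial (k-1) : ℂ))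
            * Polynomial.X ^ (∑ i : Fin m, (acard (sset h) i - (k-1)))) := by
  classical
  have hcardle : (tset h).card ≤ m := by
    simpa using Finset.card_le_univ (tset h)
  have hfilt := Finset.card_filter_add_card_filter_not
    (s := (Finset.univ : Finset (Fin m))) (p := fun i => h i = none)
  rw [Finset.card_univ, Fintype.card_fin] at hfilt
  have htc : (Finset.univ.filter fun i : Fin m => h i = none).card = (tset h).card := rfl
  have hprod : (∏ i : Fin m, ((acard (sset h) i).descFactorial (k-1) : ℂ))
      = (k.factorial : ℂ) ^ (tset h).card
          * ((k-1).factorial : ℂ) ^ (m - (tset h).card) := by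
    have h1 : ∀ i : Fin m, ((acard (sset h) i).descFactorial (k-1) : ℂ)
        = if h i = none then (k.factorial : ℂ) else ((k-1).factorial : ℂ) := by
      intro i
      rw [acard_sset hk]
      by_cases hh : h i = none
      · rw [if_pos hh, if_pos hh, desc_k_pred]
      · rw [if_neg hh, if_neg hh, Nat.descFactorial_self]
    rw [Finset.prod_congr rfl fun i _ => h1 i,
      ← Finset.prod_filter_mul_prod_filter_not Finset.univ (fun i => h i = none)]
    rw [Finset.prod_congr rfl (fun i hi => if_pos (Finset.mem_filter.mp hi).2),
      Finset.prod_congr rfl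
        (fun i hi => if_neg (Finset.mem_filter.mp hi).2 :
          ∀ i ∈ Finset.univ.filter (fun i : Fin m => ¬ h i = none),
            (if h i = none then (k.factorial : ℂ) else ((k-1).factorial : ℂ))
              = ((k-1).factorial : ℂ))]
    rw [Finset.prod_const, Finset.prod_const, htc]
    congr 2
    omega
  have hexp : (∑ i : Fin m, (acard (sset h) i - (k-1))) = (tset h).card := by
    have h1 : ∀ i : Fin m, acard (sset h) i - (k-1) = if h i = none then 1 else 0 := by
      intro i
      rw [acard_sset hk]
      by_cases hh : h i = none
      · rw [if_pos hh, if_pos hh]; omega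
      · rw [if_neg hh, if_neg hh]; omega
    rw [Finset.sum_congr rfl fun i _ => h1 i, Finset.sum_boole, ← htc]
    simp
  have hk0 : (k : ℂ) ≠ 0 := Nat.cast_ne_zero.mpr hk.ne'
  have hf0 : (k.factorial : ℂ) ≠ 0 := Nat.cast_ne_zero.mpr k.factorial_ne_zero
  have hfk : (k.factorial : ℂ) = (k : ℂ) * ((k-1).factorial : ℂ) := by
    cases k with
    | zero => exact absurd hk (lt_irrefl 0)
    | succ n =>
      rw [Nat.factorial_succ]
      push_cast
      simp
  have key : ((k:ℂ) ^ m)⁻¹ * (k:ℂ) ^ (tset h).card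
      = ((k.factorial : ℂ) ^ m)⁻¹ * ((k.factorial : ℂ) ^ (tset h).card
          * ((k-1).factorial : ℂ) ^ (m - (tset h).card)) := by
    have hmsplit : (tset h).card + (m - (tset h).card) = m := by omega
    have hf1 : ((k-1).factorial : ℂ) ≠ 0 := Nat.cast_ne_zero.mpr (k-1).factorial_ne_zero
    have e1 : ((k:ℂ)) ^ m = (k:ℂ) ^ (tset h).card * (k:ℂ) ^ (m - (tset h).card) := by
      rw [← pow_add, hmsplit]
    have e2 : ((k.factorial:ℂ)) ^ m
        = (k.factorial:ℂ) ^ (tset h).card * (k.factorial:ℂ) ^ (m - (tset h).card) := by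
      rw [← pow_add, hmsplit]
    have e3 : ((k.factorial:ℂ)) ^ (m - (tset h).card)
        = (k:ℂ) ^ (m - (tset h).card) * ((k-1).factorial:ℂ) ^ (m - (tset h).card) := by
      rw [hfk, mul_pow]
    rw [e1, e2, e3]
    have hkp : (k:ℂ) ^ (m - (tset h).card) ≠ 0 := pow_ne_zero _ hk0
    have hfp : ((k.factorial:ℂ)) ^ (tset h).card ≠ 0 := pow_ne_zero _ hf0
    have hf1p : ((k-1).factorial:ℂ) ^ (m - (tset h).card) ≠ 0 := pow_ne_zero _ hf1
    have hkcp : (k:ℂ) ^ (tset h).card ≠ 0 := pow_ne_zero _ hk0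
    field_simp
  rw [detn_sset A ⟨0, hk⟩ h, hprod, hexp, G]
  rw [← Nat.cast_smul_eq_nsmul ℂ, smul_smul, Nat.cast_pow, key, mul_smul]
  congr 1
  simp only [Polynomial.smul_eq_C_mul, Polynomial.C_mul]
  ring

end PsiAux

open PsiAux

lemma charpoly_expand {n : Type*} [DecidableEq n] [Fintype n] {R : Type*} [CommRing R]
    (M : Matrix n n R) :
    Matrix.charpoly M = ∑ t : Finset n, Polynomial.X ^ t.card *
      Polynomial.C (((-M).submatrix (Subtype.val : {x // x ∉ t} → n) Subtype.val).det) := by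
  rw [Matrix.charpoly]
  have h1 : Matrix.charmatrix M = Matrix.diagonal (fun _ => Polynomial.X) + ((-M).map Polynomial.C) := by
    ext i j
    by_cases hij : i = j
    · subst hij
      simp [Matrix.charmatrix_apply_eq, sub_eq_add_neg]
    · simp [Matrix.charmatrix_apply_ne _ _ _ hij, Matrix.diagonal_apply_ne _ hij]
  rw [h1, det_diagonal_add]
  refine Finset.sum_congr rfl fun t _ => ?_
  rw [Finset.prod_const]
  congr 1
  rw [show ((-M).map Polynomial.C).submatrix (Subtype.val : {x // x ∉ t} → n) Subtype.val
      = ((-M).submatrix Subtype.val Subtype.val).map Polynomial.C from rfl,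
    ← RingHom.mapMatrix_apply, ← RingHom.map_det]

/-- The `(k,m)`-characteristic polynomial
`ψ_{k,m}[A](x) = (1/k^m) Σ_{S ∈ P_k(m)} det[x I_m − A(S)]`.
A `k`-partition of `[m]` is encoded as a function `g : Fin m → Fin k`, the index
`i + (j-1)m` of the paper corresponding to the pair `(j,i) : Fin k × Fin m`. -/
noncomputable def psiCharPoly (k m : ℕ)
    (A : Matrix (Fin k × Fin m) (Fin k × Fin m) ℂ) : Polynomial ℂ :=
  ((k : ℂ) ^ m)⁻¹ •
    ∑ g : Fin m → Fin k,
      (A.submatrix (fun i : Fin m => (g i, i)) (fun i : Fin m => (g i, i))).charpoly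

theorem psiCharPoly_eq_iterated_pderiv (k m : ℕ) (hk : 0 < k) (hm : 0 < m)
    (A : Matrix (Fin k × Fin m) (Fin k × Fin m) ℂ) (hA : A.IsHermitian) :
    psiCharPoly k m A
      = (((Nat.factorial k : ℂ)) ^ m)⁻¹ •
          MvPolynomial.aeval (fun _ : Fin m => (Polynomial.X : Polynomial ℂ))
            ((List.finRange m).foldr
              (fun i p => (fun q => MvPolynomial.pderiv i q)^[k - 1] p)
              (Matrix.det
                (Matrix.diagonal (fun p : Fin k × Fin m =>
                    (MvPolynomial.X p.2 : MvPolynomial (Fin m) ℂ))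
                  - A.map MvPolynomial.C))) := by
  classical
  -- RHS
  have hsub : (Matrix.diagonal (fun p : Fin k × Fin m => (X p.2 : MvPolynomial (Fin m) ℂ))
        - A.map MvPolynomial.C)
      = Matrix.diagonal (fun p : Fin k × Fin m => (X p.2 : MvPolynomial (Fin m) ℂ))
        + ((-A).map MvPolynomial.C) := by
    rw [sub_eq_add_neg]
    congr 1
    ext i j
    simp [Matrix.map_apply]
  rw [hsub, det_diagonal_add, foldr_iter_pderiv_sum, map_sum]
  have hterm : ∀ s : Finset (Fin k × Fin m),
      (∏ p ∈ s, (X p.2 : MvPolynomial (Fin m) ℂ)) *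
          (((-A).map MvPolynomial.C).submatrix
            (Subtype.val : {x // x ∉ s} → (Fin k × Fin m)) Subtype.val).det
        = (∏ p ∈ s, (X p.2 : MvPolynomial (Fin m) ℂ)) * MvPolynomial.C (detn A s) := by
    intro s
    congr 1
    rw [show ((-A).map MvPolynomial.C).submatrix
          (Subtype.val : {x // x ∉ s} → (Fin k × Fin m)) Subtype.val
        = ((-A).submatrix Subtype.val Subtype.val).map MvPolynomial.C from rfl,
      ← RingHom.mapMatrix_apply, ← RingHom.map_det]
    rfl
  simp only [hterm, aeval_foldr_term]
  -- kill terms away from the image of sset, then reindex by h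
  have hzero : ∀ s ∈ (Finset.univ : Finset (Finset (Fin k × Fin m))),
      s ∉ Finset.univ.image (sset (k := k) (m := m)) →
      Polynomial.C (detn A s * ∏ i : Fin m, ((acard s i).descFactorial (k-1) : ℂ))
        * Polynomial.X ^ (∑ i : Fin m, (acard s i - (k-1))) = 0 := by
    intro s _ hs
    have hex : ∃ i, acard s i < k - 1 := by
      by_contra hcon
      push_neg at hcon
      obtain ⟨h, hh⟩ := exists_sset hk s hcon
      exact hs (Finset.mem_image.mpr ⟨h, Finset.mem_univ _, hh⟩)
    obtain ⟨i, hi⟩ := hex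
    have : (∏ i : Fin m, ((acard s i).descFactorial (k-1) : ℂ)) = 0 :=
      Finset.prod_eq_zero (Finset.mem_univ i)
        (by rw [Nat.descFactorial_of_lt hi, Nat.cast_zero])
    rw [this, mul_zero, Polynomial.C_0, zero_mul]
  rw [← Finset.sum_subset (Finset.subset_univ (Finset.univ.image (sset (k := k) (m := m))))
    (fun s _ hs => hzero s (Finset.mem_univ s) hs)]
  rw [Finset.sum_image (fun h _ h' _ hss => sset_injective hss)]
  -- LHS
  rw [psiCharPoly]
  simp only [charpoly_expand]
  have hLg : ∀ (g : Fin m → Fin k) (t : Finset (Fin m)),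
      Polynomial.X ^ t.card * Polynomial.C
        ((-(A.submatrix (fun i : Fin m => (g i, i)) (fun i : Fin m => (g i, i)))).submatrix
            (Subtype.val : {x // x ∉ t} → Fin m) Subtype.val).det
      = G A ⟨0, hk⟩ (phi g t) := by
    intro g t
    rw [show (-(A.submatrix (fun i : Fin m => (g i, i)) (fun i : Fin m => (g i, i)))).submatrix
            (Subtype.val : {x // x ∉ t} → Fin m) Subtype.val
        = (-A).submatrix (fun i : {x : Fin m // x ∉ t} => (g i.1, i.1))
            (fun i : {x : Fin m // x ∉ t} => (g i.1, i.1)) from rfl]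
    exact term_eq_G A ⟨0, hk⟩ g t
  simp only [hLg]
  rw [← Finset.sum_product', Finset.univ_product_univ]
  rw [Finset.sum_comp (G A ⟨0, hk⟩) (fun p : (Fin m → Fin k) × Finset (Fin m) => phi p.1 p.2)]
  have himg : (Finset.univ.image fun p : (Fin m → Fin k) × Finset (Fin m) => phi p.1 p.2)
      = Finset.univ :=
    Finset.eq_univ_of_forall fun h => Finset.mem_image.mpr
      ⟨⟨fun i => (h i).getD ⟨0, hk⟩, tset h⟩, Finset.mem_univ _, phi_surj hk h⟩
  rw [himg]
  have hfib : ∀ h : Fin m → Option (Fin k),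
      (Finset.univ.filter fun p : (Fin m → Fin k) × Finset (Fin m) => phi p.1 p.2 = h).card
        = k ^ (tset h).card := fiber_card hk
  simp only [hfib]
  rw [Finset.smul_sum, Finset.smul_sum]
  exact Finset.sum_congr rfl fun h _ => per_h hk A h
end

section
/- Let A ∈ ℂ^{m×m} be a positive semidefinite Hermitian matrix and let p(z_1,...,z_m) = det[diag(z_1,...,z_m) − A]. If a = (a_1,...,a_m) is above the roots of p (i.e., p(a + t) ≠ 0 for all t with nonnegative entries), then for every t ∈ [m], all roots of the univariate polynomial q(z) = p(z,...,z, a_{t+1},...,a_m) (with z in the first t slots) are nonnegative. -/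
open scoped ComplexOrder

/-- Let `A` be positive semidefinite, `p(z) = det[diag(z_1,…,z_m) − A]`, and let `a`
be above the roots of `p`.  Then for each `t`, all roots of
`q(z) = p(z,…,z,a_{t+1},…,a_m)` (with `z` in the first `t` slots) are nonnegative
(and real). -/
theorem roots_nonneg_of_aboveRoots {m : ℕ}
    (A : Matrix (Fin m) (Fin m) ℂ) (hA : A.PosSemidef)
    (p : MvPolynomial (Fin m) ℂ)
    (hp : p = Matrix.det
      (Matrix.diagonal (fun i : Fin m => (MvPolynomial.X i : MvPolynomial (Fin m) ℂ))
        - A.map MvPolynomial.C))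
    (a : Fin m → ℝ)
    (ha : ∀ s : Fin m → ℝ, (∀ i, 0 ≤ s i) →
      MvPolynomial.eval (fun i => ((a i + s i : ℝ) : ℂ)) p ≠ 0)
    (t : ℕ) (ht : t ≤ m) :
    ∀ z : ℂ,
      Polynomial.eval z
        (MvPolynomial.aeval
          (fun i : Fin m =>
            if (i : ℕ) < t then (Polynomial.X : Polynomial ℂ)
            else Polynomial.C ((a i : ℂ))) p) = 0 →
      z.im = 0 ∧ 0 ≤ z.re := by
  classical
  intro z hz
  set d : Fin m → ℂ := fun i => if (i : ℕ) < t then z else (a i : ℂ) with hd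
  -- evaluating p at a point gives a determinant
  have evalp : ∀ c : Fin m → ℂ, MvPolynomial.eval c p = (Matrix.diagonal c - A).det := by
    intro c
    rw [hp, RingHom.map_det]
    congr 1
    ext i j
    by_cases h : i = j <;>
      simp [Matrix.map_apply, Matrix.sub_apply, Matrix.diagonal_apply, h]
  -- relating the univariate evaluation to the multivariate one
  have key : ∀ q : MvPolynomial (Fin m) ℂ,
      Polynomial.eval z (MvPolynomial.aeval
        (fun i : Fin m =>
          if (i : ℕ) < t then (Polynomial.X : Polynomial ℂ)
          else Polynomial.C ((a i : ℂ))) q) = MvPolynomial.eval d q := by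
    intro q
    induction q using MvPolynomial.induction_on with
    | C c => simp
    | add q r hq hr => simp [hq, hr]
    | mul_X q i hq =>
      by_cases h : (i : ℕ) < t <;> simp [hq, h, hd]
  have hdet : (Matrix.diagonal d - A).det = 0 := by
    rw [← evalp, ← key, hz]
  -- the matrix B = diag(a) - A
  set B : Matrix (Fin m) (Fin m) ℂ := Matrix.diagonal (fun i => (a i : ℂ)) - A with hB
  have hBherm : B.IsHermitian := by
    refine Matrix.IsHermitian.sub ?_ hA.1
    rw [Matrix.isHermitian_diagonal_iff]
    intro i
    simp [IsSelfAdjoint, Complex.conj_ofReal]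
  have hdets : ∀ s : ℝ, 0 ≤ s → (B + (s : ℂ) • 1).det ≠ 0 := by
    intro s hs
    have h := ha (fun _ => s) (fun _ => hs)
    rw [evalp] at h
    have : Matrix.diagonal (fun i => ((a i + s : ℝ) : ℂ)) - A = B + (s : ℂ) • 1 := by
      ext i j
      by_cases h' : i = j <;>
        simp [hB, Matrix.diagonal_apply, Matrix.one_apply, h', Matrix.sub_apply,
          Matrix.add_apply, Matrix.smul_apply]
      push_cast
      ring
    rwa [this] at h
  have hdetB : B.det ≠ 0 := by simpa using hdets 0 le_rfl
  -- B is positive semidefinite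
  have hBpsd : B.PosSemidef := by
    refine (Matrix.IsHermitian.posSemidef_iff_eigenvalues_nonneg hBherm).mpr fun j => show (0:ℝ) ≤ hBherm.eigenvalues j from ?_
    by_contra hneg
    push_neg at hneg
    set μ : ℝ := hBherm.eigenvalues j with hμ
    have hv := hBherm.mulVec_eigenvectorBasis j
    refine hdets (-μ) (by linarith) ?_
    rw [← Matrix.exists_mulVec_eq_zero_iff]
    refine ⟨⇑(hBherm.eigenvectorBasis j), ?_, ?_⟩
    · have := hBherm.eigenvectorBasis.orthonormal.ne_zero j
      intro h0
      apply this
      ext i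
      exact congr_fun h0 i
    · rw [Matrix.add_mulVec, hv, Matrix.smul_mulVec, Matrix.one_mulVec]
      ext i
      simp [Pi.smul_apply, Complex.real_smul, hμ]
  -- the null vector of diag(d) - A
  obtain ⟨v, hvne, hMv⟩ := Matrix.exists_mulVec_eq_zero_iff.mpr hdet
  have hAv : ∀ i, (A.mulVec v) i = d i * v i := by
    intro i
    have h := congr_fun hMv i
    simp [Matrix.sub_mulVec, Matrix.mulVec_diagonal, Pi.sub_apply] at h
    linear_combination -h
  set x : Fin m → ℂ := fun i => if (i : ℕ) < t then v i else 0 with hx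
  set y : Fin m → ℂ := fun i => if (i : ℕ) < t then 0 else v i with hy
  have hxyv : x + y = v := by
    funext i
    by_cases h : (i : ℕ) < t <;> simp [hx, hy, h]
  -- x ≠ 0
  have hxne : x ≠ 0 := by
    intro hx0
    have hBv : B.mulVec v = 0 := by
      funext i
      have hvi : (i : ℕ) < t → v i = 0 := fun h => by
        have := congr_fun hx0 i
        simpa [hx, h] using this
      by_cases h : (i : ℕ) < t
      · simp [hB, Matrix.sub_mulVec, Matrix.mulVec_diagonal, Pi.sub_apply, hAv i, hvi h]
      · simp [hB, Matrix.sub_mulVec, Matrix.mulVec_diagonal, Pi.sub_apply, hAv i, hd, h]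
    exact hdetB (Matrix.exists_mulVec_eq_zero_iff.mp ⟨v, hvne, hBv⟩)
  -- hermitian symmetry of the sesquilinear form
  have herm_dot : ∀ u w : Fin m → ℂ,
      star (dotProduct (star u) (A.mulVec w)) = dotProduct (star w) (A.mulVec u) := by
    intro u w
    simp only [dotProduct, Matrix.mulVec, star_sum, star_mul', Finset.mul_sum,
      Finset.sum_mul, Pi.star_apply, star_star]
    rw [Finset.sum_comm]
    refine Finset.sum_congr rfl fun j _ => Finset.sum_congr rfl fun i _ => ?_
    have hAij : star (A i j) = A j i := by
      conv_rhs => rw [← hA.1]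
      simp [Matrix.conjTranspose_apply]
    rw [hAij]
    ring
  set n : ℂ := dotProduct (star x) x with hn
  set sA : ℂ := dotProduct (star x) (A.mulVec x) with hsA
  set sB : ℂ := dotProduct (star y) (B.mulVec y) with hsB
  have claim1 : dotProduct (star x) (A.mulVec v) = z * n := by
    simp only [hn, dotProduct, Finset.mul_sum]
    refine Finset.sum_congr rfl fun i _ => ?_
    by_cases h : (i : ℕ) < t <;> simp [hx, h, hAv i, hd] <;> ring
  have claim2 : dotProduct (star y) (A.mulVec v)
      = dotProduct (star y) ((Matrix.diagonal (fun i => (a i : ℂ))).mulVec y) := by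
    simp only [dotProduct]
    refine Finset.sum_congr rfl fun i _ => ?_
    by_cases h : (i : ℕ) < t <;>
      simp [hy, h, hAv i, hd, Matrix.mulVec_diagonal]
  have hyAx : dotProduct (star y) (A.mulVec x) = sB := by
    have hAxy : A.mulVec v = A.mulVec x + A.mulVec y := by rw [← hxyv, Matrix.mulVec_add]
    have h1 : dotProduct (star y) (A.mulVec x) + dotProduct (star y) (A.mulVec y)
        = dotProduct (star y) ((Matrix.diagonal (fun i => (a i : ℂ))).mulVec y) := by
      rw [← dotProduct_add, ← hAxy, claim2]
    rw [hsB, hB, Matrix.sub_mulVec, dotProduct_sub]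
    linear_combination h1
  have hsBnn : 0 ≤ sB := hBpsd.dotProduct_mulVec_nonneg y
  have hsAnn : 0 ≤ sA := hA.dotProduct_mulVec_nonneg x
  have hsBstar : star sB = sB := by
    rw [Complex.nonneg_iff] at hsBnn
    apply Complex.ext <;> simp [← hsBnn.2]
  have main : z * n = sA + sB := by
    have hAxy : A.mulVec v = A.mulVec x + A.mulVec y := by rw [← hxyv, Matrix.mulVec_add]
    have hxAy : dotProduct (star x) (A.mulVec y) = sB := by
      rw [← hsBstar, ← hyAx, herm_dot]
    rw [← claim1, hAxy, dotProduct_add, hxAy, hsA]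
  have hnnn : 0 ≤ n := dotProduct_star_self_nonneg x
  have hnne : n ≠ 0 := fun h => hxne (dotProduct_star_self_eq_zero.mp h)
  have hsum : 0 ≤ sA + sB := add_nonneg hsAnn hsBnn
  rw [Complex.nonneg_iff] at hsum hnnn
  have hnim : n.im = 0 := hnnn.2.symm
  have hnre : 0 < n.re := by
    rcases lt_or_eq_of_le hnnn.1 with h | h
    · exact h
    · exact absurd (Complex.ext h.symm hnim) hnne
  have him : (z * n).im = (sA + sB).im := by rw [main]
  have hre : (z * n).re = (sA + sB).re := by rw [main]
  rw [Complex.mul_im, hnim] at him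
  rw [Complex.mul_re, hnim] at hre
  have hzim : z.im = 0 := by
    have h3 : z.im * n.re = 0 := by linear_combination him - hsum.2
    exact (mul_eq_zero.mp h3).resolve_right (ne_of_gt hnre)
  refine ⟨hzim, ?_⟩
  have h4 : z.re * n.re = (sA + sB).re := by linear_combination hre
  nlinarith [hsum.1, hnre, h4]
end

section
/- Let A ∈ ℂ^{km×km} be a positive semidefinite Hermitian matrix with 0 ⪯ A ⪯ I_{km}, and set ε := max_{1≤i≤m} Σ_{j=1}^k A(i+(j−1)m, i+(j−1)m). Let p_0(z_1,...,z_m) = det[Z_k − A], where Z_k = diag(z,...,z) with k copies of z = (z_1,...,z_m). Then for any a > 1 and any i ∈ [m], the barrier function satisfies Φ^i_{p_0}(a·1) ≤ ε/(a−1) + (k−ε)/a. -/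
open scoped ComplexOrder


namespace BarrierAux

open Matrix Polynomial

noncomputable def subst {m : ℕ} (i : Fin m) (a : ℂ) : MvPolynomial (Fin m) ℂ →ₐ[ℂ] Polynomial ℂ :=
  MvPolynomial.aeval (fun j => if j = i then Polynomial.X + Polynomial.C a else Polynomial.C a)

lemma subst_X {m : ℕ} (i j : Fin m) (a : ℂ) :
    subst i a (MvPolynomial.X j) = if j = i then Polynomial.X + Polynomial.C a
      else Polynomial.C a := by simp [subst]

lemma subst_C {m : ℕ} (i : Fin m) (a c : ℂ) :
    subst i a (MvPolynomial.C c) = Polynomial.C c := by simp [subst]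

lemma subst_eval {m : ℕ} (i : Fin m) (a : ℂ) (p : MvPolynomial (Fin m) ℂ) :
    Polynomial.eval 0 (subst i a p) = MvPolynomial.eval (fun _ => a) p := by
  induction p using MvPolynomial.induction_on with
  | C c => simp [subst_C]
  | add p q hp hq => simp [hp, hq]
  | mul_X p j hp =>
    rw [_root_.map_mul, Polynomial.eval_mul, hp, subst_X, _root_.map_mul, MvPolynomial.eval_X]
    congr 1
    by_cases h : j = i <;> simp [h]

lemma subst_deriv {m : ℕ} (i : Fin m) (a : ℂ) (p : MvPolynomial (Fin m) ℂ) :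
    Polynomial.eval 0 (Polynomial.derivative (subst i a p)) =
      MvPolynomial.eval (fun _ => a) (MvPolynomial.pderiv i p) := by
  induction p using MvPolynomial.induction_on with
  | C c => simp [subst_C]
  | add p q hp hq => simp [hp, hq]
  | mul_X p j hp =>
    rw [_root_.map_mul, subst_X, Polynomial.derivative_mul, Polynomial.eval_add, Polynomial.eval_mul,
      Polynomial.eval_mul, hp, MvPolynomial.pderiv_mul, MvPolynomial.pderiv_X, map_add,
      MvPolynomial.eval_mul, MvPolynomial.eval_mul, MvPolynomial.eval_X, subst_eval]
    by_cases h : j = i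
    · subst h
      simp [Pi.single_eq_same]
    · simp [h, Pi.single_eq_of_ne h]

variable {n : Type*} [Fintype n] [DecidableEq n]

theorem eig_le_one (A : Matrix n n ℂ) (hA : A.PosSemidef) (hAI : (1 - A).PosSemidef) (κ : n) :
    hA.1.eigenvalues κ ≤ 1 := by
  have hv := hA.1.mulVec_eigenvectorBasis κ
  set v : n → ℂ := ⇑(hA.1.eigenvectorBasis κ) with hvdef
  have h2 := hAI.re_dotProduct_nonneg v
  rw [sub_mulVec, one_mulVec, hv] at h2
  have hnorm : (star v ⬝ᵥ v : ℂ) = 1 := by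
    have := EuclideanSpace.inner_eq_star_dotProduct (hA.1.eigenvectorBasis κ)
      (hA.1.eigenvectorBasis κ)
    rw [hvdef, dotProduct_comm, ← this, inner_self_eq_norm_sq_to_K, hA.1.eigenvectorBasis.orthonormal.1 κ]
    simp
  rw [dotProduct_sub, dotProduct_smul, hnorm] at h2
  simp [RCLike.smul_re] at h2
  linarith

theorem spec_M (A : Matrix n n ℂ) (hH : A.IsHermitian) (a : ℝ) :
    (a : ℂ) • (1 : Matrix n n ℂ) - A
      = (hH.eigenvectorUnitary : Matrix n n ℂ) *
          Matrix.diagonal (fun κ => ((a - hH.eigenvalues κ : ℝ) : ℂ)) *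
          star (hH.eigenvectorUnitary : Matrix n n ℂ) := by
  have hU : (hH.eigenvectorUnitary : Matrix n n ℂ) * star (hH.eigenvectorUnitary : Matrix n n ℂ)
      = 1 := Unitary.coe_mul_star_self _
  have h1 : (a : ℂ) • (1 : Matrix n n ℂ)
      = (hH.eigenvectorUnitary : Matrix n n ℂ) * ((a:ℂ) • 1) *
        star (hH.eigenvectorUnitary : Matrix n n ℂ) := by
    rw [mul_smul_comm, smul_mul_assoc, mul_one, hU]
  calc (a : ℂ) • (1 : Matrix n n ℂ) - A
      = (hH.eigenvectorUnitary : Matrix n n ℂ) *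
        ((a:ℂ) • 1 - Matrix.diagonal (RCLike.ofReal ∘ hH.eigenvalues)) *
        star (hH.eigenvectorUnitary : Matrix n n ℂ) := by
        rw [Matrix.mul_sub, Matrix.sub_mul]
        rw [← h1]
        congr 1
        exact hH.spectral_theorem
    _ = _ := by
        congr 2
        rw [smul_one_eq_diagonal, diagonal_sub]
        congr 1
        ext κ
        push_cast
        simp

theorem UdU_mul (U : Matrix n n ℂ) (hU : star U * U = 1) (d e : n → ℂ) :
    (U * Matrix.diagonal d * star U) * (U * Matrix.diagonal e * star U)
      = U * Matrix.diagonal (d * e) * star U := by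
  calc (U * Matrix.diagonal d * star U) * (U * Matrix.diagonal e * star U)
      = U * (Matrix.diagonal d * ((star U * U) * Matrix.diagonal e)) * star U := by
        simp only [Matrix.mul_assoc]
    _ = U * Matrix.diagonal (d * e) * star U := by
        rw [hU, Matrix.one_mul, Matrix.diagonal_mul_diagonal]
        simp only [Matrix.mul_assoc]
        rfl

theorem UdU_apply (U : Matrix n n ℂ) (d : n → ℂ) (q : n) :
    (U * Matrix.diagonal d * star U) q q = ∑ κ, d κ * ((Complex.normSq (U q κ) : ℝ) : ℂ) := by
  rw [Matrix.mul_apply]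
  congr 1
  ext κ
  rw [Matrix.mul_apply, Finset.sum_mul]
  rw [Finset.sum_eq_single κ]
  · simp only [Matrix.diagonal_apply_eq, Matrix.star_apply, RCLike.star_def]
    rw [mul_comm (U q κ) (d κ), mul_assoc, Complex.mul_conj]
  · intro b _ hb
    simp [Matrix.diagonal_apply_ne _ hb]
  · simp

theorem map_det_eq {k m : ℕ} (i : Fin m) (a : ℂ)
    (A M P : Matrix (Fin k × Fin m) (Fin k × Fin m) ℂ)
    (hM : M = a • (1 : Matrix (Fin k × Fin m) (Fin k × Fin m) ℂ) - A)
    (hP : P = Matrix.diagonal (fun q : Fin k × Fin m => if q.2 = i then (1:ℂ) else 0))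
    (f : MvPolynomial (Fin m) ℂ →+* Polynomial ℂ)
    (hfX : ∀ j, f (MvPolynomial.X j) = if j = i then Polynomial.X + Polynomial.C a
      else Polynomial.C a)
    (hfC : ∀ c, f (MvPolynomial.C c) = Polynomial.C c) :
    f (Matrix.det (Matrix.diagonal (fun q : Fin k × Fin m =>
        (MvPolynomial.X q.2 : MvPolynomial (Fin m) ℂ)) - A.map MvPolynomial.C))
      = Matrix.det (M.map Polynomial.C + (Polynomial.X : ℂ[X]) • P.map Polynomial.C) := by
  rw [RingHom.map_det]
  congr 1
  ext q r
  rcases eq_or_ne q r with rfl | h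
  · simp only [hM, hP, RingHom.mapMatrix_apply, Matrix.map_apply, Matrix.sub_apply,
      Matrix.add_apply, Matrix.smul_apply, Matrix.diagonal_apply_eq, Matrix.smul_apply,
      Matrix.one_apply_eq, map_sub, hfX, hfC, smul_eq_mul]
    by_cases hq : q.2 = i <;> simp [hq, smul_eq_mul] <;> ring
  · simp [hM, hP, Matrix.map_apply, hfX, hfC, Matrix.one_apply_ne h,
      Matrix.diagonal_apply_ne _ h]

theorem factor_det {n : Type*} [Fintype n] [DecidableEq n] (M P : Matrix n n ℂ)
    (h : IsUnit M.det) :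
    M.map Polynomial.C + (Polynomial.X : ℂ[X]) • P.map Polynomial.C
      = M.map Polynomial.C * (1 + (Polynomial.X : ℂ[X]) • (M⁻¹ * P).map Polynomial.C) := by
  rw [mul_add, mul_one, mul_smul_comm, ← Matrix.map_mul, ← Matrix.mul_assoc,
    Matrix.mul_nonsing_inv _ h, Matrix.one_mul]

theorem det_one_add_eval0 {n : Type*} [Fintype n] [DecidableEq n] (M N : Matrix n n ℂ) :
    Polynomial.eval 0 (Matrix.det (M.map Polynomial.C *
      (1 + (Polynomial.X : ℂ[X]) • N.map Polynomial.C))) = M.det := by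
  rw [Matrix.det_mul, Polynomial.eval_mul,
    show (M.map (Polynomial.C : ℂ → ℂ[X])).det = Polynomial.C M.det by
      rw [← RingHom.mapMatrix_apply, ← RingHom.map_det],
    eval_det_add_X_smul (1 : Matrix n n ℂ[X]) N]
  simp

theorem det_one_add_deriv0 {n : Type*} [Fintype n] [DecidableEq n] (M N : Matrix n n ℂ) :
    Polynomial.eval 0 (Polynomial.derivative (Matrix.det (M.map Polynomial.C *
      (1 + (Polynomial.X : ℂ[X]) • N.map Polynomial.C)))) = M.det * N.trace := by
  rw [Matrix.det_mul,
    show (M.map (Polynomial.C : ℂ → ℂ[X])).det = Polynomial.C M.det by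
      rw [← RingHom.mapMatrix_apply, ← RingHom.map_det],
    Polynomial.derivative_mul, Polynomial.eval_add, Polynomial.eval_mul, Polynomial.eval_mul,
    Matrix.derivative_det_one_add_X_smul N,
    eval_det_add_X_smul (1 : Matrix n n ℂ[X]) N]
  simp

theorem pointwise_ineq (a μ : ℝ) (ha : 1 < a) (h0 : 0 ≤ μ) (h1 : μ ≤ 1) :
    (a - μ)⁻¹ ≤ μ * ((a-1)⁻¹ - a⁻¹) + a⁻¹ := by
  have ha1 : (0:ℝ) < a - 1 := by linarith
  have ha0 : (0:ℝ) < a := by linarith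
  have haμ : (0:ℝ) < a - μ := by linarith
  have key : μ * ((a-1)⁻¹ - a⁻¹) + a⁻¹ - (a - μ)⁻¹ = μ*(1-μ)/((a-1)*a*(a-μ)) := by
    field_simp
    ring
  have h2 : 0 ≤ μ*(1-μ)/((a-1)*a*(a-μ)) :=
    div_nonneg (mul_nonneg h0 (by linarith)) (by positivity)
  linarith


end BarrierAux

open BarrierAux

/-- Barrier function bound: for `0 ⪯ A ⪯ I_{km}` with
`Σ_j A(i+(j−1)m, i+(j−1)m) ≤ ε` for all `i`, and `p_0(z) = det[Z_k − A]`, one has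
`Φ^i_{p_0}(a·1) ≤ ε/(a−1) + (k−ε)/a` for all `a > 1` and `i ∈ [m]`.  The index
`i+(j−1)m` of the paper corresponds to the pair `(j,i) : Fin k × Fin m`. -/
theorem barrier_bound {k m : ℕ} (hk : 0 < k) (hm : 0 < m)
    (A : Matrix (Fin k × Fin m) (Fin k × Fin m) ℂ)
    (hA : A.PosSemidef) (hAI : (1 - A).PosSemidef)
    (ε : ℝ) (hε : ∀ i : Fin m, ∑ j : Fin k, (A (j, i) (j, i)).re ≤ ε)
    (p₀ : MvPolynomial (Fin m) ℂ)
    (hp₀ : p₀ = Matrix.det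
      (Matrix.diagonal (fun q : Fin k × Fin m => (MvPolynomial.X q.2 : MvPolynomial (Fin m) ℂ))
        - A.map MvPolynomial.C))
    (a : ℝ) (ha : 1 < a) (i : Fin m) :
    (MvPolynomial.eval (fun _ : Fin m => (a : ℂ)) (MvPolynomial.pderiv i p₀)
        / MvPolynomial.eval (fun _ : Fin m => (a : ℂ)) p₀).im = 0 ∧
    (MvPolynomial.eval (fun _ : Fin m => (a : ℂ)) (MvPolynomial.pderiv i p₀)
        / MvPolynomial.eval (fun _ : Fin m => (a : ℂ)) p₀).re
      ≤ ε / (a - 1) + ((k : ℝ) - ε) / a := by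
  classical
  have hH : A.IsHermitian := hA.1
  set U : Matrix (Fin k × Fin m) (Fin k × Fin m) ℂ := (hH.eigenvectorUnitary :
    Matrix (Fin k × Fin m) (Fin k × Fin m) ℂ) with hUdef
  set μ : (Fin k × Fin m) → ℝ := hH.eigenvalues with hμdef
  have hμ0 : ∀ κ, 0 ≤ μ κ := hA.eigenvalues_nonneg
  have hμ1 : ∀ κ, μ κ ≤ 1 := eig_le_one A hA hAI
  have ha0 : (0:ℝ) < a := by linarith
  have ha1 : (0:ℝ) < a - 1 := by linarith
  have haμ : ∀ κ, (0:ℝ) < a - μ κ := fun κ => by have := hμ1 κ; linarith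
  set M : Matrix (Fin k × Fin m) (Fin k × Fin m) ℂ := (a:ℂ) • 1 - A with hMdef
  set d : (Fin k × Fin m) → ℂ := fun κ => ((a - μ κ : ℝ) : ℂ) with hddef
  have hdne : ∀ κ, d κ ≠ 0 := fun κ => by
    simp only [hddef, ne_eq, Complex.ofReal_eq_zero]
    exact (haμ κ).ne'
  have hspec : M = U * Matrix.diagonal d * star U := spec_M A hH a
  have hsU : star U * U = 1 := Unitary.coe_star_mul_self _
  have hUs : U * star U = 1 := Unitary.coe_mul_star_self _
  set R : Matrix (Fin k × Fin m) (Fin k × Fin m) ℂ :=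
    U * Matrix.diagonal (fun κ => (d κ)⁻¹) * star U with hRdef
  have hMR : M * R = 1 := by
    rw [hspec, hRdef, UdU_mul U hsU]
    have hone : (d * fun κ => (d κ)⁻¹) = fun _ => (1:ℂ) :=
      funext fun κ => mul_inv_cancel₀ (hdne κ)
    rw [hone, show (Matrix.diagonal (fun _ => (1:ℂ)) :
        Matrix (Fin k × Fin m) (Fin k × Fin m) ℂ) = 1 from Matrix.diagonal_one,
      Matrix.mul_one, hUs]
  have hdet : IsUnit M.det :=
    IsUnit.of_mul_eq_one R.det (by rw [← Matrix.det_mul, hMR, Matrix.det_one])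
  have hdetne : M.det ≠ 0 := hdet.ne_zero
  have hMinv : M⁻¹ = R := Matrix.inv_eq_right_inv hMR
  set P : Matrix (Fin k × Fin m) (Fin k × Fin m) ℂ :=
    Matrix.diagonal (fun q : Fin k × Fin m => if q.2 = i then (1:ℂ) else 0) with hPdef
  -- determinant image under substitution
  have hsub : subst i (a:ℂ) p₀ =
      Matrix.det (M.map Polynomial.C *
        (1 + (Polynomial.X : Polynomial ℂ) • (M⁻¹ * P).map Polynomial.C)) := by
    rw [hp₀, ← factor_det M P hdet]
    exact map_det_eq i (a:ℂ) A M P hMdef hPdef (subst i (a:ℂ)).toRingHom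
      (fun j => subst_X i j (a:ℂ)) (fun c => subst_C i (a:ℂ) c)
  have hE0 : MvPolynomial.eval (fun _ : Fin m => (a : ℂ)) p₀ = M.det := by
    rw [← subst_eval i (a:ℂ) p₀, hsub, det_one_add_eval0]
  have hE1 : MvPolynomial.eval (fun _ : Fin m => (a : ℂ)) (MvPolynomial.pderiv i p₀)
      = M.det * (M⁻¹ * P).trace := by
    rw [← subst_deriv i (a:ℂ) p₀, hsub, det_one_add_deriv0]
  -- trace computation
  have htr : (M⁻¹ * P).trace = ∑ j : Fin k, M⁻¹ (j, i) (j, i) := by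
    rw [Matrix.trace]
    have hdiag : ∀ q : Fin k × Fin m,
        (M⁻¹ * P).diag q = if q.2 = i then M⁻¹ q q else 0 := by
      intro q
      rw [Matrix.diag_apply, Matrix.mul_apply, Finset.sum_eq_single q]
      · rw [hPdef, Matrix.diagonal_apply_eq]
        by_cases h : q.2 = i <;> simp [h]
      · intro b _ hb
        rw [hPdef, Matrix.diagonal_apply_ne _ hb, mul_zero]
      · simp
    simp only [hdiag]
    rw [Fintype.sum_prod_type]
    apply Finset.sum_congr rfl
    intro j _
    simp
  -- diagonal entries of the inverse
  set w : Fin k → (Fin k × Fin m) → ℝ := fun j κ => Complex.normSq (U (j,i) κ) with hwdef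
  have hMd : ∀ j : Fin k, M⁻¹ (j,i) (j,i)
      = ∑ κ, (d κ)⁻¹ * ((w j κ : ℝ) : ℂ) := by
    intro j
    rw [hMinv, hRdef]
    exact UdU_apply U (fun κ => (d κ)⁻¹) (j,i)
  set T : ℝ := ∑ j : Fin k, ∑ κ, (a - μ κ)⁻¹ * w j κ with hTdef
  have hsumC : ∑ j : Fin k, M⁻¹ (j,i) (j,i) = ((T : ℝ) : ℂ) := by
    rw [hTdef]
    push_cast
    apply Finset.sum_congr rfl
    intro j _
    rw [hMd j]
    apply Finset.sum_congr rfl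
    intro κ _
    rw [hddef]
    push_cast
    ring
  have hQ : MvPolynomial.eval (fun _ : Fin m => (a : ℂ)) (MvPolynomial.pderiv i p₀)
      / MvPolynomial.eval (fun _ : Fin m => (a : ℂ)) p₀ = ((T : ℝ) : ℂ) := by
    rw [hE1, hE0, mul_div_cancel_left₀ _ hdetne, htr, hsumC]
  refine ⟨by rw [hQ]; exact Complex.ofReal_im _, ?_⟩
  rw [hQ, Complex.ofReal_re]
  -- real estimates
  have hw0 : ∀ j κ, 0 ≤ w j κ := fun _ _ => Complex.normSq_nonneg _
  have hw1 : ∀ j : Fin k, ∑ κ, w j κ = 1 := by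
    intro j
    have h : ∑ κ, ((w j κ : ℝ) : ℂ) = 1 := by
      have h1 : (U * star U) (j,i) (j,i) = (1 : Matrix (Fin k × Fin m) (Fin k × Fin m) ℂ)
          (j,i) (j,i) := by rw [hUs]
      rw [Matrix.mul_apply, Matrix.one_apply_eq] at h1
      rw [← h1]
      apply Finset.sum_congr rfl
      intro κ _
      rw [Matrix.star_apply, RCLike.star_def, Complex.mul_conj, hwdef]
    have := congrArg Complex.re h
    push_cast at this
    simpa using this
  have hs : ∀ j : Fin k, (A (j,i) (j,i)).re = ∑ κ, μ κ * w j κ := by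
    intro j
    have hAq : A (j,i) (j,i) = ∑ κ, ((μ κ : ℝ) : ℂ) * ((w j κ : ℝ) : ℂ) := by
      conv_lhs => rw [hH.spectral_theorem]
      simpa using UdU_apply U (RCLike.ofReal ∘ hH.eigenvalues) (j,i)
    rw [hAq, show ∑ κ, ((μ κ : ℝ) : ℂ) * ((w j κ : ℝ) : ℂ)
        = (((∑ κ, μ κ * w j κ : ℝ)) : ℂ) by push_cast; rfl, Complex.ofReal_re]
  have hS : ∑ j : Fin k, (∑ κ, μ κ * w j κ) ≤ ε := by
    have := hε i
    rwa [Finset.sum_congr rfl (fun j _ => hs j)] at this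
  have hc : 0 ≤ (a-1)⁻¹ - a⁻¹ := by
    have h1 : a⁻¹ ≤ (a-1)⁻¹ := by
      simpa [one_div] using one_div_le_one_div_of_le ha1 (by linarith : a - 1 ≤ a)
    linarith
  have hchain : T ≤ ((a-1)⁻¹ - a⁻¹) * (∑ j : Fin k, ∑ κ, μ κ * w j κ) + a⁻¹ * k := by
    have step1 : T ≤ ∑ j : Fin k, ∑ κ, (μ κ * ((a-1)⁻¹ - a⁻¹) + a⁻¹) * w j κ := by
      apply Finset.sum_le_sum
      intro j _
      apply Finset.sum_le_sum
      intro κ _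
      exact mul_le_mul_of_nonneg_right (pointwise_ineq a (μ κ) ha (hμ0 κ) (hμ1 κ)) (hw0 j κ)
    have step2 : ∀ j : Fin k, ∑ κ, (μ κ * ((a-1)⁻¹ - a⁻¹) + a⁻¹) * w j κ
        = ((a-1)⁻¹ - a⁻¹) * (∑ κ, μ κ * w j κ) + a⁻¹ * (∑ κ, w j κ) := by
      intro j
      rw [Finset.mul_sum, Finset.mul_sum, ← Finset.sum_add_distrib]
      exact Finset.sum_congr rfl fun κ _ => by ring
    calc T ≤ ∑ j : Fin k, ∑ κ, (μ κ * ((a-1)⁻¹ - a⁻¹) + a⁻¹) * w j κ := step1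
      _ = ∑ j : Fin k, (((a-1)⁻¹ - a⁻¹) * (∑ κ, μ κ * w j κ) + a⁻¹ * 1) := by
          apply Finset.sum_congr rfl
          intro j _
          rw [step2 j, hw1 j]
      _ = ((a-1)⁻¹ - a⁻¹) * (∑ j : Fin k, ∑ κ, μ κ * w j κ) + a⁻¹ * k := by
          rw [Finset.sum_add_distrib, ← Finset.mul_sum]
          simp [Finset.sum_const, Finset.card_univ, mul_comm]
  have hfin : ((a-1)⁻¹ - a⁻¹) * (∑ j : Fin k, ∑ κ, μ κ * w j κ) + a⁻¹ * k
      ≤ ((a-1)⁻¹ - a⁻¹) * ε + a⁻¹ * k := by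
    have := mul_le_mul_of_nonneg_left hS hc
    linarith
  have hrhs : ε/(a-1) + ((k:ℝ)-ε)/a = ((a-1)⁻¹ - a⁻¹) * ε + a⁻¹ * k := by
    field_simp
    ring
  rw [hrhs]
  linarith
end

section
/- The mixed characteristic polynomial is affine-linear in each argument: for Hermitian matrices X_1,...,X_m, X_i' ∈ ℂ^{d×d} and any α ∈ ℝ, μ[X_1,...,(1−α)X_i + αX_i',...,X_m](x) = (1−α)·μ[X_1,...,X_i,...,X_m](x) + α·μ[X_1,...,X_i',...,X_m](x). -/
open Polynomial

namespace MixedCharAux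

variable {σ : Type*} {S : Type*} [CommRing S]

/-- The operator `∏ (1 - ∂_j)` over a list of indices. -/
noncomputable def opFold (l : List σ) (p : MvPolynomial σ S) : MvPolynomial σ S :=
  l.foldr (fun i q => q - MvPolynomial.pderiv i q) p

@[simp] lemma opFold_nil (p : MvPolynomial σ S) : opFold ([] : List σ) p = p := rfl

@[simp] lemma opFold_cons (j : σ) (l : List σ) (p : MvPolynomial σ S) :
    opFold (j :: l) p = opFold l p - MvPolynomial.pderiv j (opFold l p) := rfl

lemma opFold_append (l₁ l₂ : List σ) (p : MvPolynomial σ S) :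
    opFold (l₁ ++ l₂) p = opFold l₁ (opFold l₂ p) := by
  simp [opFold, List.foldr_append]

lemma opFold_add (l : List σ) (p q : MvPolynomial σ S) :
    opFold l (p + q) = opFold l p + opFold l q := by
  induction l with
  | nil => rfl
  | cons j l ih => simp only [opFold_cons, ih, map_add]; ring

lemma opFold_C_mul (l : List σ) (c : S) (p : MvPolynomial σ S) :
    opFold l (MvPolynomial.C c * p) = MvPolynomial.C c * opFold l p := by
  induction l with
  | nil => rfl
  | cons j l ih =>
      simp only [opFold_cons, ih, MvPolynomial.pderiv_mul, MvPolynomial.pderiv_C]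
      ring

lemma dvd_pderiv_of_ne {i j : σ} (hij : i ≠ j) (k : ℕ) {p : MvPolynomial σ S}
    (h : MvPolynomial.X i ^ k ∣ p) :
    MvPolynomial.X i ^ k ∣ MvPolynomial.pderiv j p := by
  obtain ⟨r, rfl⟩ := h
  rw [MvPolynomial.pderiv_mul]
  have h0 : MvPolynomial.pderiv j ((MvPolynomial.X i : MvPolynomial σ S) ^ k) = 0 := by
    rw [Derivation.leibniz_pow, MvPolynomial.pderiv_X_of_ne hij]
    simp
  rw [h0]
  simpa using Dvd.intro _ rfl

lemma opFold_dvd (i : σ) (l : List σ) (hl : i ∉ l) (k : ℕ) {p : MvPolynomial σ S}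
    (h : MvPolynomial.X i ^ k ∣ p) : MvPolynomial.X i ^ k ∣ opFold l p := by
  induction l with
  | nil => simpa using h
  | cons j l ih =>
      have hij : i ≠ j := fun h' => hl (h' ▸ List.mem_cons_self (a := j) (l := l))
      have hl' : i ∉ l := fun h' => hl (List.mem_cons_of_mem _ h')
      exact dvd_sub (ih hl') (dvd_pderiv_of_ne hij k (ih hl'))

lemma step_self (i : σ) {p : MvPolynomial σ S}
    (h : MvPolynomial.X i ^ 2 ∣ p) :
    MvPolynomial.X i ∣ p - MvPolynomial.pderiv i p := by
  obtain ⟨r, rfl⟩ := h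
  refine ⟨MvPolynomial.X i * r - 2 * r - MvPolynomial.X i * MvPolynomial.pderiv i r, ?_⟩
  have h2 : MvPolynomial.pderiv i ((MvPolynomial.X i : MvPolynomial σ S) ^ 2 * r)
      = 2 * MvPolynomial.X i * r + MvPolynomial.X i ^ 2 * MvPolynomial.pderiv i r := by
    rw [MvPolynomial.pderiv_mul, pow_two, MvPolynomial.pderiv_mul, MvPolynomial.pderiv_X_self]
    ring
  rw [h2]; ring

lemma eval_zero_of_dvd {m : ℕ} (i : Fin m) {p : MvPolynomial (Fin m) S}
    (h : MvPolynomial.X i ∣ p) :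
    MvPolynomial.eval (fun _ : Fin m => (0 : S)) p = 0 := by
  obtain ⟨r, rfl⟩ := h
  simp

lemma eval_opFold_finRange_eq_zero {m : ℕ} (i : Fin m) {p : MvPolynomial (Fin m) S}
    (h : MvPolynomial.X i ^ 2 ∣ p) :
    MvPolynomial.eval (fun _ : Fin m => (0 : S)) (opFold (List.finRange m) p) = 0 := by
  obtain ⟨l₁, l₂, hdec⟩ := List.append_of_mem (List.mem_finRange i)
  have hnodup := List.nodup_finRange m
  rw [hdec] at hnodup
  have h1 : i ∉ l₁ := fun hi =>
    (List.disjoint_of_nodup_append hnodup) hi (List.mem_cons_self (a := i) (l := l₂))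
  have h2 : i ∉ l₂ := by
    have := (List.nodup_append'.mp hnodup).2.1
    exact (List.nodup_cons.mp this).1
  rw [hdec, opFold_append]
  have s1 : MvPolynomial.X i ^ 2 ∣ opFold l₂ p := opFold_dvd i l₂ h2 2 h
  have s2 : MvPolynomial.X i ∣ opFold (i :: l₂) p := by
    rw [opFold_cons]; exact step_self i s1
  have s3 : MvPolynomial.X i ∣ opFold l₁ (opFold (i :: l₂) p) := by
    simpa using opFold_dvd i l₁ h1 1 (by simpa using s2)
  exact eval_zero_of_dvd i s3

/-- Product of affine terms, modulo `t^2`. -/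
lemma prod_linear {ι : Type*} [DecidableEq ι] (s : Finset ι) (a b : ι → S) (t : S) :
    t ^ 2 ∣ (∏ k ∈ s, (a k + t * b k))
      - ((∏ k ∈ s, a k) + t * ∑ k ∈ s, b k * ∏ l ∈ s.erase k, a l) := by
  induction s using Finset.induction_on with
  | empty => simp
  | @insert j s hj ih =>
      obtain ⟨q, hq⟩ := ih
      have hq' : (∏ k ∈ s, (a k + t * b k))
          = ((∏ k ∈ s, a k) + t * ∑ k ∈ s, b k * ∏ l ∈ s.erase k, a l) + t ^ 2 * q := by
        linear_combination hq
      have hS : ∑ k ∈ insert j s, b k * ∏ l ∈ (insert j s).erase k, a l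
          = b j * ∏ l ∈ s, a l + a j * ∑ k ∈ s, b k * ∏ l ∈ s.erase k, a l := by
        rw [Finset.sum_insert hj, Finset.erase_insert hj, Finset.mul_sum]
        congr 1
        refine Finset.sum_congr rfl fun k hk => ?_
        rw [Finset.erase_insert_of_ne (ne_of_mem_of_not_mem hk hj).symm,
          Finset.prod_insert (fun h => hj (Finset.mem_of_mem_erase h))]
        ring
      refine ⟨a j * q + b j * (∑ k ∈ s, b k * ∏ l ∈ s.erase k, a l) + t * (b j * q), ?_⟩
      rw [Finset.prod_insert hj, Finset.prod_insert hj, hS, hq']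
      ring

/-- Determinant is affine modulo `t^2` in a direction added with weight `t`. -/
lemma det_affine {n : Type*} [DecidableEq n] [Fintype n]
    (A B B' : Matrix n n S) (t a b : S) (hab : a + b = 1) :
    t ^ 2 ∣ Matrix.det (A + t • (a • B + b • B'))
      - (a * Matrix.det (A + t • B) + b * Matrix.det (A + t • B')) := by
  simp only [Matrix.det_apply, Finset.mul_sum, Finset.smul_sum]
  rw [← Finset.sum_add_distrib, ← Finset.sum_sub_distrib]
  refine Finset.dvd_sum fun τ _ => ?_
  have key : ∀ Y : Matrix n n S,
      (∏ k, (A + t • Y) (τ k) k) = ∏ k, (A (τ k) k + t * Y (τ k) k) := by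
    intro Y; refine Finset.prod_congr rfl fun k _ => ?_
    simp [Matrix.add_apply, Matrix.smul_apply, smul_eq_mul]
  obtain ⟨q₀, hq₀⟩ := prod_linear Finset.univ (fun k => A (τ k) k)
    (fun k => (a • B + b • B') (τ k) k) t
  obtain ⟨q₁, hq₁⟩ := prod_linear Finset.univ (fun k => A (τ k) k)
    (fun k => B (τ k) k) t
  obtain ⟨q₂, hq₂⟩ := prod_linear Finset.univ (fun k => A (τ k) k)
    (fun k => B' (τ k) k) t
  have e₀ : (∏ k, (A (τ k) k + t * (a • B + b • B') (τ k) k))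
      = (∏ k, A (τ k) k)
        + t * (∑ k, (a • B + b • B') (τ k) k * ∏ l ∈ Finset.univ.erase k, A (τ l) l)
        + t ^ 2 * q₀ := by linear_combination hq₀
  have e₁ : (∏ k, (A (τ k) k + t * B (τ k) k))
      = (∏ k, A (τ k) k)
        + t * (∑ k, B (τ k) k * ∏ l ∈ Finset.univ.erase k, A (τ l) l)
        + t ^ 2 * q₁ := by linear_combination hq₁
  have e₂ : (∏ k, (A (τ k) k + t * B' (τ k) k))
      = (∏ k, A (τ k) k)
        + t * (∑ k, B' (τ k) k * ∏ l ∈ Finset.univ.erase k, A (τ l) l)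
        + t ^ 2 * q₂ := by linear_combination hq₂
  have hS : ∑ k, (a • B + b • B') (τ k) k * ∏ l ∈ Finset.univ.erase k, A (τ l) l
      = a * ∑ k, B (τ k) k * ∏ l ∈ Finset.univ.erase k, A (τ l) l
        + b * ∑ k, B' (τ k) k * ∏ l ∈ Finset.univ.erase k, A (τ l) l := by
    rw [Finset.mul_sum, Finset.mul_sum, ← Finset.sum_add_distrib]
    refine Finset.sum_congr rfl fun k _ => ?_
    simp only [Matrix.add_apply, Matrix.smul_apply, smul_eq_mul]
    ring
  rw [key, key, key]
  have hzs : ∀ x : S, (Equiv.Perm.sign τ) • x = ((Equiv.Perm.sign τ : ℤ) : S) * x := by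
    intro x
    rw [Units.smul_def, zsmul_eq_mul]
  rw [hzs, hzs, hzs]
  set es : S := ((Equiv.Perm.sign τ : ℤ) : S) with hes
  refine ⟨es * (q₀ - a * q₁ - b * q₂), ?_⟩
  linear_combination es * e₀ - a * es * e₁ - b * es * e₂ + es * t * hS
    - es * (∏ k, A (τ k) k) * hab

end MixedCharAux

/-- The mixed characteristic polynomial
`μ[X_1,…,X_m](x) = ∏_{i=1}^m (1 − ∂_{z_i}) det[x I_d + Σ_i z_i X_i] |_{z=0}`,
computed in `(ℂ[x])[z_1,…,z_m]`. -/
noncomputable def mixedCharPoly {m d : ℕ}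
    (X : Fin m → Matrix (Fin d) (Fin d) ℂ) : Polynomial ℂ :=
  MvPolynomial.eval (fun _ : Fin m => (0 : Polynomial ℂ)) <|
    (List.finRange m).foldr (fun i p => p - MvPolynomial.pderiv i p)
      (Matrix.det
        (Matrix.diagonal (fun _ : Fin d =>
            (MvPolynomial.C (Polynomial.X : Polynomial ℂ) :
              MvPolynomial (Fin m) (Polynomial ℂ)))
          + ∑ i : Fin m,
              (MvPolynomial.X i : MvPolynomial (Fin m) (Polynomial ℂ)) •
                (X i).map (fun c => MvPolynomial.C (Polynomial.C c))))

namespace MixedCharAux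

/-- The matrix `x I + ∑ z_j X_j`. -/
noncomputable def Nmat {m d : ℕ} (X : Fin m → Matrix (Fin d) (Fin d) ℂ) :
    Matrix (Fin d) (Fin d) (MvPolynomial (Fin m) (Polynomial ℂ)) :=
  Matrix.diagonal (fun _ : Fin d =>
      (MvPolynomial.C (Polynomial.X : Polynomial ℂ) : MvPolynomial (Fin m) (Polynomial ℂ)))
    + ∑ j : Fin m,
        (MvPolynomial.X j : MvPolynomial (Fin m) (Polynomial ℂ)) •
          (X j).map (fun c => MvPolynomial.C (Polynomial.C c))

lemma mixedCharPoly_eq {m d : ℕ} (X : Fin m → Matrix (Fin d) (Fin d) ℂ) :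
    mixedCharPoly X
      = MvPolynomial.eval (fun _ : Fin m => (0 : Polynomial ℂ))
          (opFold (List.finRange m) (Nmat X).det) := rfl

/-- The part of `Nmat X` not involving `z_i`. -/
noncomputable def Amat {m d : ℕ} (X : Fin m → Matrix (Fin d) (Fin d) ℂ) (i : Fin m) :
    Matrix (Fin d) (Fin d) (MvPolynomial (Fin m) (Polynomial ℂ)) :=
  Matrix.diagonal (fun _ : Fin d =>
      (MvPolynomial.C (Polynomial.X : Polynomial ℂ) : MvPolynomial (Fin m) (Polynomial ℂ)))
    + ∑ j ∈ Finset.univ \ {i},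
        (MvPolynomial.X j : MvPolynomial (Fin m) (Polynomial ℂ)) •
          (X j).map (fun c => MvPolynomial.C (Polynomial.C c))

lemma Nmat_update {m d : ℕ} (X : Fin m → Matrix (Fin d) (Fin d) ℂ) (i : Fin m)
    (Y : Matrix (Fin d) (Fin d) ℂ) :
    Nmat (Function.update X i Y)
      = Amat X i + (MvPolynomial.X i : MvPolynomial (Fin m) (Polynomial ℂ)) •
          Y.map (fun c => MvPolynomial.C (Polynomial.C c)) := by
  classical
  unfold Nmat Amat
  have h1 : ∀ j : Fin m,
      (MvPolynomial.X j : MvPolynomial (Fin m) (Polynomial ℂ)) •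
        (Function.update X i Y j).map
          (fun c => (MvPolynomial.C (Polynomial.C c) : MvPolynomial (Fin m) (Polynomial ℂ)))
      = Function.update
          (fun j => (MvPolynomial.X j : MvPolynomial (Fin m) (Polynomial ℂ)) •
            (X j).map
              (fun c => (MvPolynomial.C (Polynomial.C c) : MvPolynomial (Fin m) (Polynomial ℂ))))
          i ((MvPolynomial.X i : MvPolynomial (Fin m) (Polynomial ℂ)) •
            Y.map
              (fun c => (MvPolynomial.C (Polynomial.C c) : MvPolynomial (Fin m) (Polynomial ℂ)))) j := by
    intro j
    rcases eq_or_ne j i with rfl | hji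
    · simp
    · simp [Function.update_of_ne hji]
  rw [Finset.sum_congr rfl fun j _ => h1 j, Finset.sum_update_of_mem (Finset.mem_univ i)]
  abel

lemma Nmat_eq {m d : ℕ} (X : Fin m → Matrix (Fin d) (Fin d) ℂ) (i : Fin m) :
    Nmat X = Amat X i + (MvPolynomial.X i : MvPolynomial (Fin m) (Polynomial ℂ)) •
        (X i).map (fun c => MvPolynomial.C (Polynomial.C c)) := by
  classical
  unfold Nmat Amat
  rw [Finset.sum_eq_add_sum_sdiff_singleton_of_mem (Finset.mem_univ i)]
  abel

lemma map_combo {m d : ℕ} (B B' : Matrix (Fin d) (Fin d) ℂ) (a b : ℂ) :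
    (a • B + b • B').map
        (fun c => (MvPolynomial.C (Polynomial.C c) : MvPolynomial (Fin m) (Polynomial ℂ)))
      = (MvPolynomial.C (Polynomial.C a) : MvPolynomial (Fin m) (Polynomial ℂ)) •
          B.map (fun c => MvPolynomial.C (Polynomial.C c))
        + (MvPolynomial.C (Polynomial.C b) : MvPolynomial (Fin m) (Polynomial ℂ)) •
          B'.map (fun c => MvPolynomial.C (Polynomial.C c)) := by
  ext j k
  simp [Matrix.map_apply, Matrix.add_apply, Matrix.smul_apply, smul_eq_mul, map_add, map_mul]

end MixedCharAux

open MixedCharAux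

/-- The mixed characteristic polynomial is affine-linear in each argument. -/
theorem mixedCharPoly_affine {m d : ℕ}
    (X : Fin m → Matrix (Fin d) (Fin d) ℂ) (hX : ∀ i, (X i).IsHermitian)
    (i : Fin m) (X' : Matrix (Fin d) (Fin d) ℂ) (hX' : X'.IsHermitian)
    (α : ℝ) :
    mixedCharPoly (Function.update X i (((1 - α : ℝ) : ℂ) • X i + ((α : ℝ) : ℂ) • X'))
      = ((1 - α : ℝ) : ℂ) • mixedCharPoly X
        + ((α : ℝ) : ℂ) • mixedCharPoly (Function.update X i X') := by
  classical
  set a : ℂ := ((1 - α : ℝ) : ℂ) with ha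
  set b : ℂ := ((α : ℝ) : ℂ) with hb
  have hab : a + b = 1 := by rw [ha, hb]; push_cast; ring
  set κa : MvPolynomial (Fin m) (Polynomial ℂ) := MvPolynomial.C (Polynomial.C a) with hκa
  set κb : MvPolynomial (Fin m) (Polynomial ℂ) := MvPolynomial.C (Polynomial.C b) with hκb
  have hκ : κa + κb = 1 := by
    rw [hκa, hκb, ← map_add, ← map_add, hab, map_one, map_one]
  obtain ⟨q, hq⟩ := det_affine (Amat X i)
    ((X i).map (fun c => (MvPolynomial.C (Polynomial.C c) : MvPolynomial (Fin m) (Polynomial ℂ))))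
    (X'.map (fun c => MvPolynomial.C (Polynomial.C c)))
    (MvPolynomial.X i) κa κb hκ
  have hdet : (Nmat (Function.update X i (a • X i + b • X'))).det
      = κa * (Nmat X).det + κb * (Nmat (Function.update X i X')).det
        + (MvPolynomial.X i : MvPolynomial (Fin m) (Polynomial ℂ)) ^ 2 * q := by
    rw [Nmat_update, map_combo, Nmat_eq X i, Nmat_update]
    linear_combination hq
  have hz : MvPolynomial.eval (fun _ : Fin m => (0 : Polynomial ℂ))
      (opFold (List.finRange m)
        ((MvPolynomial.X i : MvPolynomial (Fin m) (Polynomial ℂ)) ^ 2 * q)) = 0 :=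
    eval_opFold_finRange_eq_zero i ⟨q, rfl⟩
  rw [mixedCharPoly_eq, mixedCharPoly_eq, mixedCharPoly_eq, hdet, opFold_add, opFold_add,
    opFold_C_mul, opFold_C_mul, map_add, map_add, hz, add_zero, map_mul, map_mul,
    MvPolynomial.eval_C, MvPolynomial.eval_C, Polynomial.smul_eq_C_mul, Polynomial.smul_eq_C_mul]
end

section
/- Let f: ℝ → ℝ be the function t ↦ maxroot ψ_{k,m}[A + t·vv*] for a Hermitian matrix A ∈ ℂ^{km×km} and a nonzero vector v ∈ ℂ^{km}. Then f is continuous and monotone nondecreasing on ℝ. -/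
open Polynomial

/-- The largest (real) root of a real-rooted polynomial over `ℂ`. -/
noncomputable def maxRoot (p : Polynomial ℂ) : ℝ :=
  sSup {x : ℝ | p.eval (x : ℂ) = 0}


section MSSProof
open Polynomial Matrix BigOperators Finset Filter
set_option linter.unusedSectionVars false
set_option linter.unusedVariables false
set_option maxHeartbeats 1000000

namespace MSS
variable {R : Type*} [CommRing R] {ι : Type*} [DecidableEq ι] [Fintype ι]

variable {R : Type*} [CommRing R] {ι : Type*} [DecidableEq ι] [Fintype ι]

/-- identity outside `S`. -/
def pad (M : Matrix ι ι R) (S : Finset ι) : Matrix ι ι R :=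
  Matrix.of fun p q => if p ∈ S ∧ q ∈ S then M p q else (if p = q then 1 else 0)

/-- rows/cols in `W` replaced by identity. -/
def idify (M : Matrix ι ι R) (W : Finset ι) : Matrix ι ι R :=
  Matrix.of fun p q => if p ∈ W ∨ q ∈ W then (if p = q then 1 else 0) else M p q

lemma idify_idify (M : Matrix ι ι R) (W W' : Finset ι) :
    idify (idify M W) W' = idify M (W ∪ W') := by
  funext p q
  simp only [idify, Matrix.of_apply, Finset.mem_union]
  by_cases h1 : p ∈ W <;> by_cases h2 : q ∈ W <;> by_cases h3 : p ∈ W' <;>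
    by_cases h4 : q ∈ W' <;> simp [h1, h2, h3, h4]

lemma idify_pad (M : Matrix ι ι R) (S W : Finset ι) :
    idify (pad M S) W = pad M (S \ W) := by
  funext p q
  simp only [idify, pad, Matrix.of_apply, Finset.mem_sdiff]
  by_cases h1 : p ∈ W <;> by_cases h2 : q ∈ W <;> by_cases h3 : p ∈ S <;>
    by_cases h4 : q ∈ S <;> simp [h1, h2, h3, h4]

lemma idify_map (M : Matrix ι ι R) (W : Finset ι) {S : Type*} [CommRing S] (f : R →+* S) :
    (idify M W).map f = idify (M.map f) W := by
  funext p q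
  simp only [idify, Matrix.map_apply, Matrix.of_apply]
  split_ifs <;> simp

lemma updateRow_updateCol_single (M : Matrix ι ι R) (w : ι) :
    (M.updateCol w (Pi.single w 1)).updateRow w (Pi.single w 1) = idify M {w} := by
  funext p q
  simp only [idify, Matrix.of_apply, Finset.mem_singleton, Matrix.updateRow_apply,
    Matrix.updateCol_apply, Pi.single_apply]
  by_cases hp : p = w <;> by_cases hq : q = w <;>
    simp [hp, hq, eq_comm, Ne.symm]

/-- det of a matrix whose `w`-column is the basis vector is unchanged by also
replacing the `w`-row with the basis vector. -/
lemma det_updateCol_single (M : Matrix ι ι R) (w : ι) :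
    (M.updateCol w (Pi.single w 1)).det
      = ((M.updateCol w (Pi.single w 1)).updateRow w (Pi.single w 1)).det := by
  set K := M.updateCol w (Pi.single w 1) with hK
  set K' := K.updateRow w (Pi.single w 1) with hK'
  have hrow : K = K'.updateRow w (Pi.single w 1 + fun j => if j = w then 0 else M w j) := by
    funext i j
    simp only [K', K, Matrix.updateRow_apply, Matrix.updateCol_apply, Pi.add_apply,
      Pi.single_apply]
    by_cases hi : i = w <;> by_cases hj : j = w <;> simp [hi, hj, eq_comm]
  have h0 : (K'.updateRow w (fun j => if j = w then 0 else M w j)).det = 0 := by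
    apply Matrix.det_eq_zero_of_column_eq_zero w
    intro i
    simp only [K', K, Matrix.updateRow_apply, Matrix.updateCol_apply, Pi.single_apply]
    by_cases hi : i = w <;> simp [hi]
  have hidem : (K.updateRow w (Pi.single w 1)).updateRow w (Pi.single w 1)
      = K.updateRow w (Pi.single w 1) := by
    funext i j
    simp only [Matrix.updateRow_apply]
    split_ifs <;> rfl
  calc K.det = (K'.updateRow w (Pi.single w 1 + fun j => if j = w then 0 else M w j)).det := by
        rw [← hrow]
    _ = (K'.updateRow w (Pi.single w 1)).det
          + (K'.updateRow w (fun j => if j = w then 0 else M w j)).det := by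
        rw [Matrix.det_updateRow_add]
    _ = K'.det := by
        rw [h0, add_zero, hK', hidem]

/-- single diagonal perturbation -/
lemma det_add_diag_single (M : Matrix ι ι R) (w : ι) (y : R) :
    (Matrix.of fun p q => M p q + (if p = w ∧ q = w then y else 0)).det
      = M.det + y * (idify M {w}).det := by
  have hmat : (Matrix.of fun p q => M p q + (if p = w ∧ q = w then y else 0))
      = M.updateCol w ((fun i => M i w) + y • (Pi.single w (1:R) : ι → R)) := by
    funext p q
    simp only [Matrix.of_apply, Matrix.updateCol_apply, Pi.add_apply, Pi.smul_apply,
      Pi.single_apply, smul_eq_mul]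
    by_cases hp : p = w <;> by_cases hq : q = w <;> simp [hp, hq]
  rw [hmat, Matrix.det_updateCol_add, Matrix.det_updateCol_smul]
  congr 1
  · congr 1
    funext p q
    simp only [Matrix.updateCol_apply]
    split_ifs with h
    · subst h; rfl
    · rfl
  · rw [det_updateCol_single, updateRow_updateCol_single]

/-- multi-slot diagonal perturbation: full expansion over subsets. -/
lemma det_add_diag (M : Matrix ι ι R) (W : Finset ι) (y : R) :
    (Matrix.of fun p q => M p q + (if p = q ∧ p ∈ W then y else 0)).det
      = ∑ U ∈ W.powerset, y ^ U.card * (idify M U).det := by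
  induction W using Finset.induction generalizing M with
  | empty =>
    simp only [Finset.powerset_empty, Finset.sum_singleton, Finset.card_empty, pow_zero, one_mul]
    have : idify M ∅ = M := by
      funext p q; simp [idify]
    rw [this]
    congr 1
    funext p q
    simp
  | @insert a W ha ih =>
    have hsplit : (Matrix.of fun p q => M p q + (if p = q ∧ p ∈ insert a W then y else 0))
        = Matrix.of fun p q => (Matrix.of fun p' q' => M p' q'
            + (if p' = q' ∧ p' ∈ W then y else 0)) p q + (if p = a ∧ q = a then y else 0) := by
      funext p q
      simp only [Matrix.of_apply, Finset.mem_insert]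
      by_cases h1 : p = q
      · subst h1
        by_cases h2 : p = a
        · subst h2; simp [ha]
        · simp [h2]
      · have h3 : ¬(p = a ∧ q = a) := by rintro ⟨rfl, rfl⟩; exact h1 rfl
        simp [h1, h3]
    rw [hsplit, det_add_diag_single, ih]
    have hidstep : (idify (Matrix.of fun p' q' => M p' q' + (if p' = q' ∧ p' ∈ W then y else 0)) {a})
        = Matrix.of fun p q => (idify M {a}) p q + (if p = q ∧ p ∈ W then y else 0) := by
      funext p q
      simp only [idify, Matrix.of_apply, Finset.mem_singleton]
      by_cases hp : p = a <;> by_cases hq : q = a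
      · subst hp; subst hq; simp [ha]
      · subst hp; simp [ha, hq]
      · subst hq; simp [hp]
      · simp [hp, hq]
    rw [hidstep, ih]
    rw [Finset.sum_powerset_insert ha]
    rw [Finset.mul_sum]
    congr 1
    apply Finset.sum_congr rfl
    intro U hU
    rw [Finset.mem_powerset] at hU
    have haU : a ∉ U := fun h => ha (hU h)
    have : ({a} ∪ U : Finset ι) = insert a U := by
      ext x; simp [Finset.mem_insert]
    rw [idify_idify, this, Finset.card_insert_of_notMem haU]
    ring


lemma det_add_rows_aux (S : Finset ι) (r : R) (u w : ι → R) :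
    ∀ M : Matrix ι ι R,
    (Matrix.of fun i j => M i j + (if i ∈ S then r * (u i * w j) else 0)).det
      = M.det + r * ∑ i ∈ S, u i * (M.updateRow i w).det := by
  induction S using Finset.induction with
  | empty =>
    intro M
    have h0 : (Matrix.of fun i j => M i j + (if i ∈ (∅ : Finset ι) then r * (u i * w j) else 0)) = M := by
      funext i j; simp
    rw [h0]; simp
  | @insert a S ha ih =>
    intro M
    have hsplit : (Matrix.of fun i j => M i j + (if i ∈ insert a S then r * (u i * w j) else 0))
        = (Matrix.of fun i j => M i j + (if i ∈ S then r * (u i * w j) else 0)).updateRow a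
            (M a + (r * u a) • w) := by
      funext i j
      simp only [Matrix.of_apply, Matrix.updateRow_apply, Finset.mem_insert, Pi.add_apply,
        Pi.smul_apply, smul_eq_mul]
      by_cases hi : i = a
      · subst hi; simp [ha]; ring
      · simp [hi]
    rw [hsplit]
    set MS := Matrix.of fun i j => M i j + (if i ∈ S then r * (u i * w j) else 0) with hMS
    have hMa : M a = MS a := by
      funext j; simp [hMS, ha]
    rw [hMa, Matrix.det_updateRow_add, Matrix.updateRow_eq_self, Matrix.det_updateRow_smul]
    have hrow : MS.updateRow a w
        = Matrix.of fun i j => (M.updateRow a w) i j + (if i ∈ S then r * (u i * w j) else 0) := by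
      funext i j
      simp only [hMS, Matrix.updateRow_apply, Matrix.of_apply]
      by_cases hi : i = a
      · subst hi; simp [ha]
      · simp [hi]
    have hzero : ∀ i ∈ S, u i * ((M.updateRow a w).updateRow i w).det = 0 := by
      intro i hi
      have hia : i ≠ a := fun h => ha (h ▸ hi)
      have : ((M.updateRow a w).updateRow i w).det = 0 := by
        apply Matrix.det_zero_of_row_eq hia
        funext j
        simp [Matrix.updateRow_apply, hia, Ne.symm hia]
      rw [this, mul_zero]
    have h2 : (MS.updateRow a w).det = (M.updateRow a w).det := by
      rw [hrow, ih (M.updateRow a w), Finset.sum_congr rfl hzero]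
      simp
    rw [h2, Finset.sum_insert ha, ih M]
    ring

/-- determinant of a rank-one update is affine in the scalar. -/
lemma det_add_smul_vecMulVec (M : Matrix ι ι R) (u w : ι → R) (r : R) :
    (M + r • Matrix.vecMulVec u w).det
      = M.det + r * ((M + Matrix.vecMulVec u w).det - M.det) := by
  have key : ∀ s : R, (M + s • Matrix.vecMulVec u w).det
      = M.det + s * ∑ i, u i * (M.updateRow i w).det := by
    intro s
    have : M + s • Matrix.vecMulVec u w
        = Matrix.of fun i j => M i j + (if i ∈ (Finset.univ : Finset ι) then s * (u i * w j) else 0) := by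
      funext i j
      simp [Matrix.vecMulVec_apply, mul_assoc]
    rw [this, det_add_rows_aux]
  have k1 := key 1
  rw [one_smul] at k1
  rw [key r, k1]
  ring


/-- positive-definite imaginary part (as a quadratic form). -/
def Good (M : Matrix ι ι ℂ) : Prop :=
  ∀ v : ι → ℂ, v ≠ 0 → 0 < (star v ⬝ᵥ M.mulVec v).im

lemma star_dotProduct_self (v : ι → ℂ) :
    star v ⬝ᵥ v = ((∑ p, Complex.normSq (v p) : ℝ) : ℂ) := by
  rw [dotProduct]
  push_cast
  apply Finset.sum_congr rfl
  intro p _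
  rw [Pi.star_apply, Complex.star_def, ← Complex.normSq_eq_conj_mul_self]

lemma herm_quadform_im (B : Matrix ι ι ℂ) (hB : B.IsHermitian) (v : ι → ℂ) :
    (star v ⬝ᵥ B.mulVec v).im = 0 := by
  set z := star v ⬝ᵥ B.mulVec v with hz
  have h1 : z = star (star (B.mulVec v) ⬝ᵥ v) := by
    rw [hz, star_dotProduct]
  have h2 : (starRingEnd ℂ) z = z := by
    conv_lhs => rw [h1]
    rw [← Complex.star_def, star_star]
    rw [Matrix.star_mulVec, hB.eq, ← Matrix.dotProduct_mulVec]
  exact Complex.conj_eq_iff_im.mp h2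

lemma good_of_smul_one_sub (B : Matrix ι ι ℂ) (hB : B.IsHermitian) (x : ℂ) (hx : 0 < x.im) :
    Good (x • (1 : Matrix ι ι ℂ) - B) := by
  intro v hv
  have hmv : (x • (1 : Matrix ι ι ℂ) - B).mulVec v = x • v - B.mulVec v := by
    rw [Matrix.sub_mulVec, Matrix.smul_mulVec, Matrix.one_mulVec]
  rw [hmv, dotProduct_sub, dotProduct_smul]
  have h1 := star_dotProduct_self v
  have h2 := herm_quadform_im B hB v
  have h3 : 0 < ∑ p, Complex.normSq (v p) := by
    have : ∃ p, v p ≠ 0 := by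
      by_contra h
      push_neg at h
      exact hv (funext h)
    obtain ⟨p, hp⟩ := this
    apply Finset.sum_pos' (fun q _ => Complex.normSq_nonneg _)
    exact ⟨p, Finset.mem_univ p, by simpa using (Complex.normSq_pos).mpr hp⟩
  rw [Complex.sub_im, smul_eq_mul, h1, h2, sub_zero, Complex.mul_im]
  simp only [Complex.ofReal_re, Complex.ofReal_im, mul_zero, add_zero]
  positivity

lemma good_add_diag (M : Matrix ι ι ℂ) (hM : Good M) (y : ℂ) (hy : 0 ≤ y.im)
    (d : ι → ℝ) (hd : ∀ p, 0 ≤ d p) :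
    Good (M + y • Matrix.diagonal (fun p => (d p : ℂ))) := by
  intro v hv
  have hmv : (M + y • Matrix.diagonal (fun p => (d p : ℂ))).mulVec v
      = M.mulVec v + y • (Matrix.diagonal (fun p => (d p : ℂ))).mulVec v := by
    rw [Matrix.add_mulVec, Matrix.smul_mulVec]
  rw [hmv, dotProduct_add, dotProduct_smul, Complex.add_im]
  have hdq : star v ⬝ᵥ (Matrix.diagonal (fun p => (d p : ℂ))).mulVec v
      = ((∑ p, d p * Complex.normSq (v p) : ℝ) : ℂ) := by
    rw [dotProduct]
    push_cast
    apply Finset.sum_congr rfl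
    intro p _
    rw [Matrix.mulVec_diagonal, Pi.star_apply, Complex.star_def]
    rw [mul_comm ((d p : ℂ)) (v p), ← mul_assoc, ← Complex.normSq_eq_conj_mul_self]
    ring
  rw [hdq, smul_eq_mul, Complex.mul_im]
  simp only [Complex.ofReal_re, Complex.ofReal_im, mul_zero, add_zero]
  have hs : 0 ≤ ∑ p, d p * Complex.normSq (v p) :=
    Finset.sum_nonneg fun p _ => mul_nonneg (hd p) (Complex.normSq_nonneg _)
  have := hM v hv
  nlinarith [mul_nonneg hy hs]

lemma det_pad_ne_zero (M : Matrix ι ι ℂ) (hM : Good M) (S : Finset ι) :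
    (pad M S).det ≠ 0 := by
  intro hdet
  obtain ⟨v, hv, hker⟩ := (Matrix.exists_mulVec_eq_zero_iff).mpr hdet
  -- v vanishes outside S
  have hout : ∀ p ∉ S, v p = 0 := by
    intro p hp
    have := congrFun hker p
    rw [Matrix.mulVec, dotProduct] at this
    have hrow : ∀ q, pad M S p q * v q = (if p = q then 1 else 0) * v q := by
      intro q
      congr 1
      simp only [pad, Matrix.of_apply]
      rw [if_neg]
      rintro ⟨h1, _⟩
      exact hp h1
    rw [Finset.sum_congr rfl (fun q _ => hrow q)] at this
    simpa using this
  -- quadratic form vanishes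
  have hq : star v ⬝ᵥ M.mulVec v = 0 := by
    rw [dotProduct]
    apply Finset.sum_eq_zero
    intro p _
    by_cases hp : p ∈ S
    · have hMv : M.mulVec v p = (pad M S).mulVec v p := by
        rw [Matrix.mulVec, Matrix.mulVec, dotProduct, dotProduct]
        apply Finset.sum_congr rfl
        intro q _
        by_cases hq : q ∈ S
        · simp [pad, hp, hq]
        · rw [hout q hq, mul_zero, mul_zero]
      rw [hMv, hker, Pi.zero_apply, mul_zero]
    · rw [Pi.star_apply, hout p hp, star_zero, zero_mul]
  have := hM v hv
  rw [hq] at this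
  simp at this


section Induction
variable {k m : ℕ}

/-- the slots kept: classes in `F` fully, classes in `T` transversally via `g`. -/
def keep (F T : Finset (Fin m)) (g : Fin m → Fin k) : Finset (Fin k × Fin m) :=
  Finset.univ.filter (fun p => p.2 ∈ F ∨ (p.2 ∈ T ∧ p.1 = g p.2))

noncomputable def GG (F T : Finset (Fin m)) (M : Matrix (Fin k × Fin m) (Fin k × Fin m) ℂ) : ℂ :=
  ∑ g : Fin m → Fin k, (pad M (keep F T g)).det

def classSet (k : ℕ) (c : Fin m) : Finset (Fin k × Fin m) :=
  Finset.univ.image (fun j : Fin k => (j, c))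

lemma mem_classSet {c : Fin m} {p : Fin k × Fin m} : p ∈ classSet k c ↔ p.2 = c := by
  constructor
  · rintro hp
    simp only [classSet, Finset.mem_image] at hp
    obtain ⟨j, _, rfl⟩ := hp
    rfl
  · intro h
    simp only [classSet, Finset.mem_image]
    exact ⟨p.1, Finset.mem_univ _, by rw [← h]⟩

lemma card_classSet (c : Fin m) : (classSet k c).card = k := by
  rw [classSet, Finset.card_image_of_injective _ (fun a b hab => (Prod.mk.injEq _ _ _ _).mp hab |>.1)]
  simp

/-- diagonal indicator of class c -/
def dInd (c : Fin m) : Fin k × Fin m → ℝ := fun p => if p.2 = c then 1 else 0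

lemma resum (c : Fin m) (f : (Fin m → Fin k) → ℂ) :
    ∑ g : Fin m → Fin k, ∑ j : Fin k, f (Function.update g c j) = (k : ℂ) * ∑ g, f g := by
  classical
  set e := Equiv.funSplitAt c (Fin k) with he
  have key : ∀ (a : Fin k) (h : {j // j ≠ c} → Fin k) (j : Fin k),
      Function.update (e.symm (a, h)) c j = e.symm (j, h) := by
    intro a h j
    funext i
    by_cases hi : i = c
    · subst hi
      simp [Function.update_self, he, Equiv.funSplitAt]
    · simp [Function.update_of_ne hi, he, Equiv.funSplitAt, hi]
  calc ∑ g : Fin m → Fin k, ∑ j : Fin k, f (Function.update g c j)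
      = ∑ p : Fin k × ({j // j ≠ c} → Fin k), ∑ j : Fin k, f (Function.update (e.symm p) c j) := by
        rw [← Equiv.sum_comp e.symm (fun g => ∑ j : Fin k, f (Function.update g c j))]
    _ = ∑ p : Fin k × ({j // j ≠ c} → Fin k), ∑ j : Fin k, f (e.symm (j, p.2)) := by
        apply Finset.sum_congr rfl
        intro p _
        apply Finset.sum_congr rfl
        intro j _
        rw [show p = (p.1, p.2) from rfl, key]
    _ = ∑ a : Fin k, ∑ h : {j // j ≠ c} → Fin k, ∑ j : Fin k, f (e.symm (j, h)) := by
        rw [Fintype.sum_prod_type]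
    _ = (k : ℂ) * ∑ h : {j // j ≠ c} → Fin k, ∑ j : Fin k, f (e.symm (j, h)) := by
        rw [Finset.sum_const, Finset.card_univ, Fintype.card_fin, nsmul_eq_mul]
    _ = (k : ℂ) * ∑ p : Fin k × ({j // j ≠ c} → Fin k), f (e.symm p) := by
        rw [Fintype.sum_prod_type]
        congr 1
        rw [Finset.sum_comm]
    _ = (k : ℂ) * ∑ g, f g := by
        rw [Equiv.sum_comp e.symm f]

lemma multiset_sum_im_nonpos (s : Multiset ℂ) :
    (∀ z ∈ s, z.im ≤ 0) → s.sum.im ≤ 0 := by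
  refine Multiset.induction_on s (by intro _; simp) ?_
  intro a t ih h
  rw [Multiset.sum_cons, Complex.add_im]
  have h1 : a.im ≤ 0 := h a (Multiset.mem_cons_self a t)
  have h2 : t.sum.im ≤ 0 := ih (fun z hz => h z (Multiset.mem_cons_of_mem hz))
  linarith

lemma multiset_sum_im_neg (s : Multiset ℂ) (hcard : 0 < Multiset.card s)
    (h : ∀ z ∈ s, z.im < 0) : s.sum.im < 0 := by
  obtain ⟨a, ha⟩ := Multiset.card_pos_iff_exists_mem.mp hcard
  obtain ⟨t, rfl⟩ := Multiset.exists_cons_of_mem ha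
  rw [Multiset.sum_cons, Complex.add_im]
  have h1 : a.im < 0 := h a (Multiset.mem_cons_self a t)
  have h2 : t.sum.im ≤ 0 :=
    multiset_sum_im_nonpos t (fun z hz => le_of_lt (h z (Multiset.mem_cons_of_mem hz)))
  linarith

theorem GG_ne_zero (hk : 0 < k) :
    ∀ (N : ℕ) (T F : Finset (Fin m)), T.card = N → Disjoint F T →
    ∀ M : Matrix (Fin k × Fin m) (Fin k × Fin m) ℂ, Good M → GG F T M ≠ 0 := by
  intro N
  induction N with
  | zero =>
    intro T F hT _ M hM
    rw [Finset.card_eq_zero] at hT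
    subst hT
    have hkeep : ∀ g : Fin m → Fin k, keep F ∅ g = Finset.univ.filter (fun p => p.2 ∈ F) := by
      intro g; ext p; simp [keep]
    rw [GG]
    rw [Finset.sum_congr rfl (fun g _ => by rw [hkeep g])]
    rw [Finset.sum_const, Finset.card_univ]
    have hd := det_pad_ne_zero M hM (Finset.univ.filter (fun p => p.2 ∈ F))
    simp only [nsmul_eq_mul]
    apply mul_ne_zero _ hd
    rw [Nat.cast_ne_zero]
    have : Nonempty (Fin m → Fin k) := ⟨fun _ => ⟨0, hk⟩⟩
    exact Fintype.card_ne_zero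
  | succ N ih =>
    intro T F hT hFT M hM
    have hTne : T.Nonempty := Finset.card_pos.mp (by omega)
    obtain ⟨c, hc⟩ := hTne
    have hcF : c ∉ F := fun h => (Finset.disjoint_left.mp hFT h) hc
    set F' := insert c F with hF'
    set T' := T.erase c with hT'
    have hT'card : T'.card = N := by rw [hT', Finset.card_erase_of_mem hc, hT]; omega
    have hFT' : Disjoint F T' := hFT.mono_right (Finset.erase_subset _ _)
    have hF'T' : Disjoint F' T' := by
      rw [hF', Finset.disjoint_insert_left]
      exact ⟨Finset.notMem_erase _ _, hFT'⟩
    -- set identities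
    have hCsub : ∀ g : Fin m → Fin k, classSet k c ⊆ keep F' T' g := by
      intro g p hp
      rw [mem_classSet] at hp
      simp [keep, hp, hF']
    have hE1 : ∀ g : Fin m → Fin k, keep F' T' g \ classSet k c = keep F T' g := by
      intro g
      ext p
      simp only [Finset.mem_sdiff, keep, Finset.mem_filter, Finset.mem_univ, true_and,
        mem_classSet, hF', Finset.mem_insert, hT']
      by_cases hpc : p.2 = c
      · simp only [hpc]
        simp [hcF, Finset.notMem_erase]
      · simp [hpc]
    have hE2 : ∀ (g : Fin m → Fin k) (j : Fin k),
        keep F T' g ∪ {(j, c)} = keep F T (Function.update g c j) := by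
      intro g j
      ext p
      simp only [Finset.mem_union, keep, Finset.mem_filter, Finset.mem_univ, true_and,
        Finset.mem_singleton, hT']
      by_cases hpc : p.2 = c
      · have hup : Function.update g c j p.2 = j := by rw [hpc]; exact Function.update_self _ _ _
        have hne : p.2 ∉ T.erase c := by rw [hpc]; exact Finset.notMem_erase _ _
        have hpF : p.2 ∉ F := by rw [hpc]; exact hcF
        have hpT : p.2 ∈ T := by rw [hpc]; exact hc
        have hpeq : p = (j, c) ↔ p.1 = j := by
          rw [Prod.ext_iff]
          simp [hpc]
        simp [hne, hpF, hpT, hup, hpeq]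
      · have hup : Function.update g c j p.2 = g p.2 := Function.update_of_ne hpc _ _
        have hmem : p.2 ∈ T.erase c ↔ p.2 ∈ T := by
          rw [Finset.mem_erase]; exact and_iff_right hpc
        have hpeq : ¬(p = (j, c)) := by
          intro h; rw [h] at hpc; exact hpc rfl
        simp [hup, hmem, hpeq]
    -- the per-g polynomial
    set DP : (Fin m → Fin k) → Polynomial ℂ := fun g =>
      (Matrix.of fun p q => Polynomial.C ((pad M (keep F' T' g)) p q)
        + (if p = q ∧ p ∈ classSet k c then (X : ℂ[X]) else 0)).det with hDP
    have hexp : ∀ g, DP g = ∑ U ∈ (classSet k c).powerset,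
        (X : ℂ[X]) ^ (k - U.card) * Polynomial.C ((pad M (keep F T' g ∪ U)).det) := by
      intro g
      simp only [hDP]
      have h1 : (Matrix.of fun p q => Polynomial.C ((pad M (keep F' T' g)) p q)
          + (if p = q ∧ p ∈ classSet k c then (X : ℂ[X]) else 0))
          = (Matrix.of fun p q => ((pad M (keep F' T' g)).map Polynomial.C) p q
            + (if p = q ∧ p ∈ classSet k c then (X : ℂ[X]) else 0)) := rfl
      rw [h1, det_add_diag]
      refine Finset.sum_nbij' (fun U => classSet k c \ U) (fun U => classSet k c \ U)
        ?_ ?_ ?_ ?_ ?_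
      · intro U hU
        rw [Finset.mem_powerset] at hU ⊢
        exact Finset.sdiff_subset
      · intro U hU
        rw [Finset.mem_powerset] at hU ⊢
        exact Finset.sdiff_subset
      · intro U hU
        rw [Finset.mem_powerset] at hU
        exact Finset.sdiff_sdiff_eq_self hU
      · intro U hU
        rw [Finset.mem_powerset] at hU
        exact Finset.sdiff_sdiff_eq_self hU
      · intro U hU
        rw [Finset.mem_powerset] at hU
        have hid : idify ((pad M (keep F' T' g)).map Polynomial.C) U
            = ((pad M (keep F' T' g \ U)).map Polynomial.C) := by
          rw [← idify_map, idify_pad]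
        have hcard : k - (classSet k c \ U).card = U.card := by
          rw [Finset.card_sdiff_of_subset hU, card_classSet]
          have := Finset.card_le_card hU
          rw [card_classSet] at this
          omega
        have hset : keep F' T' g \ U = keep F T' g ∪ (classSet k c \ U) := by
          ext p
          simp only [Finset.mem_sdiff, Finset.mem_union, ← hE1 g, Finset.mem_sdiff]
          by_cases hpC : p ∈ classSet k c
          · have hpS : p ∈ keep F' T' g := hCsub g hpC
            by_cases hpU : p ∈ U <;> simp [hpC, hpU, hpS]
          · have hpU : p ∉ U := fun h => hpC (hU h)
            simp [hpC, hpU]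
        rw [hid, hset, hcard, ← RingHom.mapMatrix_apply, ← RingHom.map_det]
    -- Ψ and its coefficients
    set Ψ : Polynomial ℂ := ∑ g : Fin m → Fin k, DP g with hΨ
    have hcoeff : ∀ (g : Fin m → Fin k) (j : ℕ), (DP g).coeff j
        = ∑ U ∈ (classSet k c).powerset,
            (if j = k - U.card then (pad M (keep F T' g ∪ U)).det else 0) := by
      intro g j
      rw [hexp g, Polynomial.finset_sum_coeff]
      apply Finset.sum_congr rfl
      intro U _
      rw [mul_comm, Polynomial.coeff_C_mul, Polynomial.coeff_X_pow, mul_ite, mul_one, mul_zero]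
    have hcardle : ∀ U ∈ (classSet k c).powerset, U.card ≤ k := by
      intro U hU
      rw [Finset.mem_powerset] at hU
      have := Finset.card_le_card hU
      rwa [card_classSet] at this
    have hckDP : ∀ g, (DP g).coeff k = (pad M (keep F T' g)).det := by
      intro g
      rw [hcoeff g k]
      rw [Finset.sum_eq_single ∅ (fun U hU hUne => by
        have h0 : U.card ≠ 0 := fun hc0 => hUne (Finset.card_eq_zero.mp hc0)
        have h1 := hcardle U hU
        rw [if_neg (by omega)]) (fun h => absurd (Finset.empty_mem_powerset _) h)]
      simp
    have hΨk : Ψ.coeff k = GG F T' M := by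
      rw [hΨ, Polynomial.finset_sum_coeff]
      exact Finset.sum_congr rfl (fun g _ => hckDP g)
    have hck1DP : ∀ g, (DP g).coeff (k-1)
        = ∑ j : Fin k, (pad M (keep F T (Function.update g c j))).det := by
      intro g
      rw [hcoeff g (k-1)]
      have hstep1 : ∀ U ∈ (classSet k c).powerset,
          (if k-1 = k - U.card then (pad M (keep F T' g ∪ U)).det else 0)
          = (if U.card = 1 then (pad M (keep F T' g ∪ U)).det else 0) := by
        intro U hU
        have h1 := hcardle U hU
        by_cases hc1 : U.card = 1
        · rw [if_pos hc1, if_pos (by omega)]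
        · rw [if_neg hc1, if_neg (by omega)]
      rw [Finset.sum_congr rfl hstep1, ← Finset.sum_filter, ← Finset.powersetCard_eq_filter,
        Finset.powersetCard_one, Finset.sum_map]
      simp only [Function.Embedding.coeFn_mk]
      rw [classSet, Finset.sum_image (fun a _ b _ hab => ((Prod.mk.injEq _ _ _ _).mp hab).1)]
      apply Finset.sum_congr rfl
      intro j _
      rw [hE2 g j]
    have hΨk1 : Ψ.coeff (k-1) = (k : ℂ) * GG F T M := by
      rw [hΨ, Polynomial.finset_sum_coeff]
      rw [Finset.sum_congr rfl (fun g _ => hck1DP g)]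
      exact resum c (fun g => (pad M (keep F T g)).det)
    -- evaluation identity
    have heval : ∀ y : ℂ, Ψ.eval y
        = GG F' T' (M + y • Matrix.diagonal (fun p => ((dInd c p : ℝ) : ℂ))) := by
      intro y
      rw [hΨ, Polynomial.eval_finset_sum]
      apply Finset.sum_congr rfl
      intro g _
      simp only [hDP]
      have hdet := RingHom.map_det (Polynomial.evalRingHom y)
        (Matrix.of fun p q => Polynomial.C ((pad M (keep F' T' g)) p q)
          + (if p = q ∧ p ∈ classSet k c then (X : ℂ[X]) else 0))
      rw [Polynomial.coe_evalRingHom] at hdet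
      rw [hdet]
      congr 1
      funext p q
      simp only [RingHom.mapMatrix_apply, Matrix.map_apply, Matrix.of_apply, Polynomial.eval_add,
        Polynomial.eval_C, Polynomial.coe_evalRingHom, apply_ite (Polynomial.eval y),
        Polynomial.eval_X, Polynomial.eval_zero]
      show (pad M (keep F' T' g)) p q + _
          = pad (M + y • Matrix.diagonal (fun p => ((dInd c p : ℝ) : ℂ))) (keep F' T' g) p q
      simp only [pad, Matrix.of_apply, Matrix.add_apply, Matrix.smul_apply,
        Matrix.diagonal_apply, dInd, smul_eq_mul]
      by_cases hpq : p ∈ keep F' T' g ∧ q ∈ keep F' T' g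
      · rw [if_pos hpq, if_pos hpq]
        by_cases hpq2 : p = q
        · subst hpq2
          by_cases hpc : p.2 = c
          · have hpC : p ∈ classSet k c := mem_classSet.mpr hpc
            simp [hpC, hpc]
          · have hpC : p ∉ classSet k c := fun h => hpc (mem_classSet.mp h)
            simp [hpC, hpc]
        · simp [hpq2]
      · rw [if_neg hpq, if_neg hpq]
        have hni : ¬(p = q ∧ p ∈ classSet k c) := by
          rintro ⟨rfl, hpC⟩
          exact hpq ⟨hCsub g hpC, hCsub g hpC⟩
        rw [if_neg hni, add_zero]
    -- conclusion via roots of Ψ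
    have hGT' : GG F T' M ≠ 0 := ih T' F hT'card hFT' M hM
    have hΨne : Ψ ≠ 0 := fun h => hGT' (by rw [← hΨk, h, Polynomial.coeff_zero])
    have hdegle : Ψ.natDegree ≤ k := by
      rw [hΨ]
      apply Polynomial.natDegree_sum_le_of_forall_le
      intro g _
      rw [hexp g]
      apply Polynomial.natDegree_sum_le_of_forall_le
      intro U _
      refine le_trans (Polynomial.natDegree_mul_le) ?_
      rw [Polynomial.natDegree_X_pow, Polynomial.natDegree_C]
      omega
    have hdeg : Ψ.natDegree = k :=
      le_antisymm hdegle (Polynomial.le_natDegree_of_ne_zero (hΨk ▸ hGT'))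
    have hsplits := IsAlgClosed.splits Ψ
    have hcard : Multiset.card Ψ.roots = k := by
      rw [Polynomial.splits_iff_card_roots.mp hsplits, hdeg]
    have hrootsim : ∀ z ∈ Ψ.roots, z.im < 0 := by
      intro z hz
      by_contra hge
      push_neg at hge
      have hzero : Ψ.eval z = 0 := (Polynomial.mem_roots hΨne).mp hz
      rw [heval z] at hzero
      refine ih T' F' hT'card hF'T' _ ?_ hzero
      refine good_add_diag M hM z hge (dInd c) (fun p => ?_)
      simp only [dInd]
      split_ifs <;> norm_num
    have hfac := hsplits.eq_prod_roots
    have hlead : Ψ.leadingCoeff = GG F T' M := by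
      rw [Polynomial.leadingCoeff, hdeg, hΨk]
    have hc1 : Ψ.coeff (k-1) = Ψ.leadingCoeff * (-(Ψ.roots.sum)) := by
      conv_lhs => rw [hfac]
      rw [Polynomial.coeff_C_mul]
      congr 1
      have hcp := Polynomial.multiset_prod_X_sub_C_coeff_card_pred Ψ.roots (by rw [hcard]; omega)
      rw [hcard] at hcp
      rw [hcp]
    have hsumne : Ψ.roots.sum ≠ 0 := by
      intro h0
      have := multiset_sum_im_neg Ψ.roots (by rw [hcard]; omega) hrootsim
      rw [h0] at this
      simp at this
    have hc1ne : Ψ.coeff (k-1) ≠ 0 := by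
      rw [hc1, hlead]
      exact mul_ne_zero hGT' (neg_ne_zero.mpr hsumne)
    intro hGG
    rw [hGG, mul_zero] at hΨk1
    exact hc1ne hΨk1
end Induction
variable {k m : ℕ}

section Bridge
variable {κ : Type*} [DecidableEq κ] [Fintype κ] {R : Type*} [CommRing R]

lemma det_pad_submatrix (N : Matrix ι ι R) (e : κ → ι) (he : Function.Injective e)
    (S : Finset ι) (hS : ∀ p, p ∈ S ↔ ∃ i, e i = p) :
    (pad N S).det = (N.submatrix e e).det := by
  classical
  set f' : κ ⊕ {p : ι // p ∉ S} → ι := Sum.elim e Subtype.val with hf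
  have hinj : Function.Injective f' := by
    rintro (i | p) (i' | p') h
    · simp only [hf, Sum.elim_inl] at h
      rw [he h]
    · exfalso
      simp only [hf, Sum.elim_inl, Sum.elim_inr] at h
      exact p'.2 ((hS _).mpr ⟨i, h⟩)
    · exfalso
      simp only [hf, Sum.elim_inl, Sum.elim_inr] at h
      exact p.2 ((hS _).mpr ⟨i', h.symm⟩)
    · simp only [hf, Sum.elim_inr] at h
      rw [Subtype.ext h]
  have hsurj : Function.Surjective f' := by
    intro p
    by_cases hp : p ∈ S
    · obtain ⟨i, hi⟩ := (hS p).mp hp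
      exact ⟨Sum.inl i, hi⟩
    · exact ⟨Sum.inr ⟨p, hp⟩, rfl⟩
  set E := Equiv.ofBijective f' ⟨hinj, hsurj⟩ with hE
  have h1 : (pad N S).det = ((pad N S).submatrix E E).det :=
    (Matrix.det_submatrix_equiv_self E (pad N S)).symm
  have h2 : (pad N S).submatrix E E
      = Matrix.fromBlocks (N.submatrix e e) 0 0 (1 : Matrix {p : ι // p ∉ S} {p : ι // p ∉ S} R) := by
    funext p q
    cases p with
    | inl i =>
      cases q with
      | inl i' =>
        have hi : e i ∈ S := (hS _).mpr ⟨i, rfl⟩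
        have hi' : e i' ∈ S := (hS _).mpr ⟨i', rfl⟩
        simp [pad, hE, Equiv.ofBijective, hf, hi, hi', Matrix.fromBlocks, Matrix.submatrix]
      | inr p' =>
        have hi : e i ∈ S := (hS _).mpr ⟨i, rfl⟩
        have hne : e i ≠ p'.val := fun h => p'.2 (h ▸ hi)
        simp [pad, hE, Equiv.ofBijective, hf, hi, p'.2, hne, Matrix.fromBlocks, Matrix.submatrix]
    | inr p' =>
      cases q with
      | inl i' =>
        have hi' : e i' ∈ S := (hS _).mpr ⟨i', rfl⟩
        have hne : p'.val ≠ e i' := fun h => p'.2 (h ▸ hi')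
        simp [pad, hE, Equiv.ofBijective, hf, p'.2, hne, Matrix.fromBlocks, Matrix.submatrix]
      | inr q' =>
        by_cases h : p' = q'
        · subst h
          simp [pad, hE, Equiv.ofBijective, hf, p'.2, Matrix.fromBlocks, Matrix.submatrix,
            Matrix.one_apply]
        · have hne : p'.val ≠ q'.val := fun hh => h (Subtype.ext hh)
          simp [pad, hE, Equiv.ofBijective, hf, p'.2, q'.2, hne, h, Matrix.fromBlocks,
            Matrix.submatrix, Matrix.one_apply]
  rw [h1, h2, Matrix.det_fromBlocks_zero₂₁, Matrix.det_one, mul_one]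

lemma eval_charpoly_aux (M : Matrix ι ι ℂ) (x : ℂ) :
    M.charpoly.eval x = (x • (1 : Matrix ι ι ℂ) - M).det := by
  rw [Matrix.charpoly]
  have hdet := RingHom.map_det (Polynomial.evalRingHom x) (Matrix.charmatrix M)
  rw [Polynomial.coe_evalRingHom] at hdet
  rw [hdet]
  congr 1
  funext p q
  simp only [RingHom.mapMatrix_apply, Matrix.map_apply, Matrix.charmatrix_apply,
    Matrix.sub_apply, Matrix.diagonal_apply, Polynomial.eval_sub, Polynomial.eval_C,
    apply_ite (Polynomial.eval x), Polynomial.eval_X, Polynomial.eval_zero,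
    Matrix.smul_apply, Matrix.one_apply, smul_eq_mul]
  split_ifs <;> simp
end Bridge

/-- the basic evaluation formula. -/
lemma psi_eval (hk : 0 < k) (A : Matrix (Fin k × Fin m) (Fin k × Fin m) ℂ) (x : ℂ) :
    (psiCharPoly k m A).eval x
      = ((k : ℂ) ^ m)⁻¹ * ∑ g : Fin m → Fin k,
          (x • (1 : Matrix (Fin m) (Fin m) ℂ)
            - A.submatrix (fun i : Fin m => (g i, i)) (fun i : Fin m => (g i, i))).det := by
  rw [psiCharPoly, Polynomial.eval_smul, smul_eq_mul]
  congr 1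
  rw [Polynomial.eval_finset_sum]
  exact Finset.sum_congr rfl (fun g _ => eval_charpoly_aux _ x)

lemma psi_eval_GG (hk : 0 < k) (A : Matrix (Fin k × Fin m) (Fin k × Fin m) ℂ) (x : ℂ) :
    (psiCharPoly k m A).eval x
      = ((k : ℂ) ^ m)⁻¹ * GG ∅ Finset.univ (x • (1 : Matrix (Fin k × Fin m) (Fin k × Fin m) ℂ) - A) := by
  rw [psi_eval hk A x, GG]
  congr 1
  apply Finset.sum_congr rfl
  intro g _
  have he : Function.Injective (fun i : Fin m => ((g i, i) : Fin k × Fin m)) := by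
    intro a b hab
    exact (Prod.ext_iff.mp hab).2
  rw [det_pad_submatrix _ (fun i : Fin m => ((g i, i) : Fin k × Fin m)) he _ ?_]
  · congr 1
    funext a b
    simp only [Matrix.submatrix_apply, Matrix.sub_apply, Matrix.smul_apply, Matrix.one_apply,
      smul_eq_mul, Prod.mk.injEq]
    by_cases hab : a = b
    · subst hab; simp
    · have : ¬(g a = g b ∧ a = b) := fun h => hab h.2
      simp [hab, this]
  · intro p
    simp only [keep, Finset.mem_filter, Finset.mem_univ, true_and, Finset.notMem_empty,
      false_or]
    constructor
    · intro h
      exact ⟨p.2, Prod.ext_iff.mpr ⟨h.symm, rfl⟩⟩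
    · rintro ⟨i, hi⟩
      subst hi
      rfl

theorem psi_eval_ne_zero (hk : 0 < k) (A : Matrix (Fin k × Fin m) (Fin k × Fin m) ℂ)
    (hA : A.IsHermitian) (x : ℂ) (hx : x.im ≠ 0) :
    (psiCharPoly k m A).eval x ≠ 0 := by
  have main : ∀ (B : Matrix (Fin k × Fin m) (Fin k × Fin m) ℂ), B.IsHermitian →
      ∀ y : ℂ, 0 < y.im → (psiCharPoly k m B).eval y ≠ 0 := by
    intro B hB y hy
    rw [psi_eval_GG hk B y]
    apply mul_ne_zero
    · simp only [ne_eq, inv_eq_zero, pow_eq_zero_iff']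
      intro ⟨h, _⟩
      rw [Nat.cast_eq_zero] at h
      omega
    · exact GG_ne_zero hk (Finset.univ.card) Finset.univ ∅ rfl (Finset.disjoint_empty_left _)
        _ (good_of_smul_one_sub B hB y hy)
  rcases lt_or_gt_of_ne hx with hneg | hpos
  · have hsum : ∑ g : Fin m → Fin k,
        ((-x) • (1 : Matrix (Fin m) (Fin m) ℂ)
          - (-A).submatrix (fun i : Fin m => (g i, i)) (fun i : Fin m => (g i, i))).det
        = (-1 : ℂ) ^ m * ∑ g : Fin m → Fin k,
            (x • (1 : Matrix (Fin m) (Fin m) ℂ)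
              - A.submatrix (fun i : Fin m => (g i, i)) (fun i : Fin m => (g i, i))).det := by
      rw [Finset.mul_sum]
      apply Finset.sum_congr rfl
      intro g _
      have hmat : (-x) • (1 : Matrix (Fin m) (Fin m) ℂ)
          - (-A).submatrix (fun i : Fin m => (g i, i)) (fun i : Fin m => (g i, i))
          = -(x • (1 : Matrix (Fin m) (Fin m) ℂ)
            - A.submatrix (fun i : Fin m => (g i, i)) (fun i : Fin m => (g i, i))) := by
        funext a b
        simp only [Matrix.sub_apply, Matrix.smul_apply, Matrix.neg_apply, Matrix.submatrix_apply,
          smul_eq_mul]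
        ring
      rw [hmat, Matrix.det_neg, Fintype.card_fin]
    have hrel : (psiCharPoly k m (-A)).eval (-x)
        = (-1 : ℂ) ^ m * (psiCharPoly k m A).eval x := by
      rw [psi_eval hk (-A) (-x), psi_eval hk A x, hsum]
      ring
    intro h0
    apply main (-A) hA.neg (-x) (by simpa using hneg)
    rw [hrel, h0, mul_zero]
  · exact main A hA x hpos


lemma kpow_ne_zero (hk : 0 < k) : ((k : ℂ) ^ m) ≠ 0 := by
  apply pow_ne_zero
  rw [Nat.cast_ne_zero]
  omega

/-- ψ is monic of degree m -/
lemma psi_monic (hk : 0 < k) (A : Matrix (Fin k × Fin m) (Fin k × Fin m) ℂ) :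
    (psiCharPoly k m A).Monic ∧ (psiCharPoly k m A).natDegree = m := by
  have hchar : ∀ g : Fin m → Fin k,
      (A.submatrix (fun i : Fin m => (g i, i)) (fun i : Fin m => (g i, i))).charpoly.natDegree = m := by
    intro g
    rw [Matrix.charpoly_natDegree_eq_dim, Fintype.card_fin]
  have hdegle : (psiCharPoly k m A).natDegree ≤ m := by
    rw [psiCharPoly]
    refine le_trans (Polynomial.natDegree_smul_le _ _) ?_
    apply Polynomial.natDegree_sum_le_of_forall_le
    intro g _
    rw [hchar g]
  have hcoeffm : (psiCharPoly k m A).coeff m = 1 := by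
    rw [psiCharPoly, Polynomial.coeff_smul, Polynomial.finset_sum_coeff]
    have : ∀ g : Fin m → Fin k,
        (A.submatrix (fun i : Fin m => (g i, i)) (fun i : Fin m => (g i, i))).charpoly.coeff m
          = 1 := by
      intro g
      have hm := Matrix.charpoly_monic
        (A.submatrix (fun i : Fin m => (g i, i)) (fun i : Fin m => (g i, i)))
      have := hm.coeff_natDegree
      rwa [hchar g] at this
    rw [Finset.sum_congr rfl (fun g _ => this g), Finset.sum_const, Finset.card_univ,
      Fintype.card_fun, Fintype.card_fin, Fintype.card_fin, nsmul_eq_mul, mul_one,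
      smul_eq_mul]
    rw [Nat.cast_pow]
    exact inv_mul_cancel₀ (kpow_ne_zero hk)
  have hmonic : (psiCharPoly k m A).Monic :=
    Polynomial.monic_of_natDegree_le_of_coeff_eq_one m hdegle hcoeffm
  refine ⟨hmonic, le_antisymm hdegle (Polynomial.le_natDegree_of_ne_zero ?_)⟩
  rw [hcoeffm]
  exact one_ne_zero

/-- affinity in the rank-one parameter -/
lemma psi_affine (hk : 0 < k) (A : Matrix (Fin k × Fin m) (Fin k × Fin m) ℂ)
    (v : Fin k × Fin m → ℂ) (τ : ℂ) :
    psiCharPoly k m (A + τ • Matrix.vecMulVec v (star v))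
      = psiCharPoly k m A
        + τ • (psiCharPoly k m (A + Matrix.vecMulVec v (star v)) - psiCharPoly k m A) := by
  apply Polynomial.funext
  intro x
  have hsub : ∀ (g : Fin m → Fin k) (B : Matrix (Fin k × Fin m) (Fin k × Fin m) ℂ) (s : ℂ),
      (A + s • Matrix.vecMulVec v (star v)).submatrix
          (fun i : Fin m => (g i, i)) (fun i : Fin m => (g i, i))
        = A.submatrix (fun i : Fin m => (g i, i)) (fun i : Fin m => (g i, i))
          + s • Matrix.vecMulVec (fun i : Fin m => v (g i, i))
              (star fun i : Fin m => v (g i, i)) := by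
    intro g B s
    funext a b
    simp only [Matrix.submatrix_apply, Matrix.add_apply, Matrix.smul_apply,
      Matrix.vecMulVec_apply, Pi.star_apply, smul_eq_mul]
  have hkey : ∀ (g : Fin m → Fin k) (s : ℂ),
      (x • (1 : Matrix (Fin m) (Fin m) ℂ)
        - (A + s • Matrix.vecMulVec v (star v)).submatrix
            (fun i : Fin m => (g i, i)) (fun i : Fin m => (g i, i))).det
      = (x • (1 : Matrix (Fin m) (Fin m) ℂ)
          - A.submatrix (fun i : Fin m => (g i, i)) (fun i : Fin m => (g i, i))).det
        + s * ((x • (1 : Matrix (Fin m) (Fin m) ℂ)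
          - (A + Matrix.vecMulVec v (star v)).submatrix
              (fun i : Fin m => (g i, i)) (fun i : Fin m => (g i, i))).det
          - (x • (1 : Matrix (Fin m) (Fin m) ℂ)
            - A.submatrix (fun i : Fin m => (g i, i)) (fun i : Fin m => (g i, i))).det) := by
    intro g s
    set w : Fin m → ℂ := fun i => v (g i, i) with hw
    set M0 := x • (1 : Matrix (Fin m) (Fin m) ℂ)
      - A.submatrix (fun i : Fin m => (g i, i)) (fun i : Fin m => (g i, i)) with hM0
    have h1 : ∀ s' : ℂ, x • (1 : Matrix (Fin m) (Fin m) ℂ)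
        - (A + s' • Matrix.vecMulVec v (star v)).submatrix
            (fun i : Fin m => (g i, i)) (fun i : Fin m => (g i, i))
        = M0 + s' • Matrix.vecMulVec (-w) (star w) := by
      intro s'
      rw [hsub g A s']
      funext a b
      simp only [hM0, Matrix.sub_apply, Matrix.add_apply, Matrix.smul_apply,
        Matrix.vecMulVec_apply, Pi.star_apply, Pi.neg_apply, smul_eq_mul, hw]
      ring
    have h2 : x • (1 : Matrix (Fin m) (Fin m) ℂ)
        - (A + Matrix.vecMulVec v (star v)).submatrix
            (fun i : Fin m => (g i, i)) (fun i : Fin m => (g i, i))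
        = M0 + Matrix.vecMulVec (-w) (star w) := by
      have := h1 1
      rwa [one_smul, one_smul] at this
    rw [h1 s, h2, det_add_smul_vecMulVec]
  rw [Polynomial.eval_add, Polynomial.eval_smul, Polynomial.eval_sub, smul_eq_mul]
  rw [psi_eval hk _ x, psi_eval hk A x, psi_eval hk (A + Matrix.vecMulVec v (star v)) x]
  rw [Finset.sum_congr rfl (fun g _ => hkey g τ)]
  rw [Finset.sum_add_distrib, ← Finset.mul_sum, Finset.sum_sub_distrib]
  ring

/-- counting: sum over all g of a function of g i -/
lemma sum_eval_at (hk : 0 < k) (hm : 0 < m) (i : Fin m) (h : Fin k → ℝ) :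
    ∑ g : Fin m → Fin k, h (g i) = (k : ℝ) ^ (m - 1) * ∑ j : Fin k, h j := by
  classical
  set e := Equiv.funSplitAt i (Fin k) with he
  have hcomp : ∀ p : Fin k × ({j // j ≠ i} → Fin k), (e.symm p) i = p.1 := by
    intro p
    simp [he, Equiv.funSplitAt]
  calc ∑ g : Fin m → Fin k, h (g i)
      = ∑ p : Fin k × ({j // j ≠ i} → Fin k), h ((e.symm p) i) := by
        rw [← Equiv.sum_comp e.symm (fun g => h (g i))]
    _ = ∑ p : Fin k × ({j // j ≠ i} → Fin k), h p.1 := by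
        exact Finset.sum_congr rfl (fun p _ => by rw [hcomp p])
    _ = ∑ a : Fin k, ∑ b : {j // j ≠ i} → Fin k, h a := by
        rw [Fintype.sum_prod_type]
    _ = (k : ℝ) ^ (m - 1) * ∑ j : Fin k, h j := by
        rw [Finset.sum_comm]
        rw [Finset.sum_const, Finset.card_univ, nsmul_eq_mul]
        congr 1
        rw [Fintype.card_fun, Fintype.card_fin]
        have hcs : Fintype.card {j : Fin m // j ≠ i} = m - 1 := by
          have hcc := Fintype.card_subtype_compl (p := fun j : Fin m => j = i)
          rw [Fintype.card_subtype_eq, Fintype.card_fin] at hcc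
          exact hcc
        rw [hcs]
        push_cast
        ring

/-- the (m-1)-coefficient of P - Q -/
lemma psi_coeff_sub (hk : 0 < k) (hm : 0 < m) (A : Matrix (Fin k × Fin m) (Fin k × Fin m) ℂ)
    (v : Fin k × Fin m → ℂ) :
    (psiCharPoly k m A - psiCharPoly k m (A + Matrix.vecMulVec v (star v))).coeff (m-1)
      = (((∑ p, Complex.normSq (v p)) / k : ℝ) : ℂ) := by
  have hne : Nonempty (Fin m) := ⟨⟨0, hm⟩⟩
  have hcoeffdiff : ∀ g : Fin m → Fin k,
      (A.submatrix (fun i : Fin m => (g i, i)) (fun i : Fin m => (g i, i))).charpoly.coeff (m-1)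
      - ((A + Matrix.vecMulVec v (star v)).submatrix
          (fun i : Fin m => (g i, i)) (fun i : Fin m => (g i, i))).charpoly.coeff (m-1)
      = ((∑ i : Fin m, Complex.normSq (v (g i, i)) : ℝ) : ℂ) := by
    intro g
    have t1 := Matrix.trace_eq_neg_charpoly_coeff
      (A.submatrix (fun i : Fin m => (g i, i)) (fun i : Fin m => (g i, i)))
    have t2 := Matrix.trace_eq_neg_charpoly_coeff
      ((A + Matrix.vecMulVec v (star v)).submatrix
        (fun i : Fin m => (g i, i)) (fun i : Fin m => (g i, i)))
    rw [Fintype.card_fin] at t1 t2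
    have e1 : (A.submatrix (fun i : Fin m => (g i, i)) (fun i : Fin m => (g i, i))).charpoly.coeff (m-1)
        = -(A.submatrix (fun i : Fin m => (g i, i)) (fun i : Fin m => (g i, i))).trace := by
      rw [t1]; ring
    have e2 : ((A + Matrix.vecMulVec v (star v)).submatrix
          (fun i : Fin m => (g i, i)) (fun i : Fin m => (g i, i))).charpoly.coeff (m-1)
        = -((A + Matrix.vecMulVec v (star v)).submatrix
          (fun i : Fin m => (g i, i)) (fun i : Fin m => (g i, i))).trace := by
      rw [t2]; ring
    rw [e1, e2]
    have htr : ((A + Matrix.vecMulVec v (star v)).submatrix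
          (fun i : Fin m => (g i, i)) (fun i : Fin m => (g i, i))).trace
        - (A.submatrix (fun i : Fin m => (g i, i)) (fun i : Fin m => (g i, i))).trace
        = ((∑ i : Fin m, Complex.normSq (v (g i, i)) : ℝ) : ℂ) := by
      rw [Matrix.trace, Matrix.trace, ← Finset.sum_sub_distrib]
      push_cast
      apply Finset.sum_congr rfl
      intro i _
      simp only [Matrix.diag_apply, Matrix.submatrix_apply, Matrix.add_apply,
        Matrix.vecMulVec_apply, Pi.star_apply]
      rw [add_sub_cancel_left, mul_comm, Complex.star_def,
        ← Complex.normSq_eq_conj_mul_self]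
    linear_combination htr
  -- assemble
  rw [psiCharPoly, psiCharPoly, ← smul_sub, Polynomial.coeff_smul]
  have hc1 : (∑ g : Fin m → Fin k,
        (A.submatrix (fun i : Fin m => (g i, i)) (fun i : Fin m => (g i, i))).charpoly
      - ∑ g : Fin m → Fin k,
        ((A + Matrix.vecMulVec v (star v)).submatrix
          (fun i : Fin m => (g i, i)) (fun i : Fin m => (g i, i))).charpoly).coeff (m-1)
      = (((k:ℝ)^(m-1) * ∑ p : Fin k × Fin m, Complex.normSq (v p) : ℝ) : ℂ) := by
    rw [Polynomial.coeff_sub, Polynomial.finset_sum_coeff, Polynomial.finset_sum_coeff,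
      ← Finset.sum_sub_distrib]
    rw [Finset.sum_congr rfl (fun g _ => hcoeffdiff g)]
    rw [show (∑ g : Fin m → Fin k, (((∑ i : Fin m, Complex.normSq (v (g i, i)) : ℝ)) : ℂ))
        = (((∑ g : Fin m → Fin k, ∑ i : Fin m, Complex.normSq (v (g i, i)) : ℝ)) : ℂ) by
      push_cast; rfl]
    congr 1
    rw [Finset.sum_comm]
    have hrow : ∀ i : Fin m, ∑ g : Fin m → Fin k, Complex.normSq (v (g i, i))
        = (k:ℝ)^(m-1) * ∑ j : Fin k, Complex.normSq (v (j, i)) := by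
      intro i
      exact sum_eval_at hk hm i (fun j => Complex.normSq (v (j, i)))
    rw [Finset.sum_congr rfl (fun i _ => hrow i), ← Finset.mul_sum]
    congr 1
    rw [Fintype.sum_prod_type]
    rw [Finset.sum_comm]
  rw [hc1, smul_eq_mul]
  have hkC : ((k:ℂ)^m) = (((k:ℝ)^m : ℝ) : ℂ) := by push_cast; ring
  rw [hkC, ← Complex.ofReal_inv, ← Complex.ofReal_mul]
  congr 1
  have hkR : (k:ℝ) ≠ 0 := Nat.cast_ne_zero.mpr (by omega)
  have hpow : (k:ℝ)^m = (k:ℝ)^(m-1) * k := by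
    rw [← pow_succ]
    congr 1
    omega
  rw [hpow]
  field_simp


lemma vecMulVec_star_herm {ι : Type*} [Fintype ι] (v : ι → ℂ) :
    (Matrix.vecMulVec v (star v)).IsHermitian := by
  rw [Matrix.IsHermitian]
  funext p q
  simp only [Matrix.conjTranspose_apply, Matrix.vecMulVec_apply, Pi.star_apply]
  rw [StarMul.star_mul, star_star]

lemma At_herm (A : Matrix (Fin k × Fin m) (Fin k × Fin m) ℂ) (hA : A.IsHermitian)
    (v : Fin k × Fin m → ℂ) (t : ℝ) :
    (A + (t:ℂ) • Matrix.vecMulVec v (star v)).IsHermitian := by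
  apply hA.add
  rw [Matrix.IsHermitian, Matrix.conjTranspose_smul, (vecMulVec_star_herm v).eq]
  congr 1
  exact Complex.conj_ofReal t

/-- real polynomial whose complexification is ψ[B], for Hermitian B. -/
lemma exists_real_psi (hk : 0 < k) (B : Matrix (Fin k × Fin m) (Fin k × Fin m) ℂ)
    (hB : B.IsHermitian) :
    ∃ Pr : Polynomial ℝ, Pr.map (algebraMap ℝ ℂ) = psiCharPoly k m B
      ∧ Pr.Monic ∧ Pr.natDegree = m := by
  obtain ⟨hmon, hdeg⟩ := psi_monic hk B
  set P := psiCharPoly k m B with hP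
  have hsplits : Splits P := IsAlgClosed.splits P
  have hroots_real : ∀ z ∈ P.roots, z.im = 0 := by
    intro z hz
    by_contra him
    exact psi_eval_ne_zero hk B hB z him ((Polynomial.mem_roots hmon.ne_zero).mp hz)
  set Pr : Polynomial ℝ := (P.roots.map (fun z => (X : Polynomial ℝ) - C z.re)).prod with hPr
  have hmap : Pr.map (algebraMap ℝ ℂ) = P := by
    rw [hPr, Polynomial.map_multiset_prod, Multiset.map_map]
    have hcongr : ∀ z ∈ P.roots,
        ((Polynomial.map (algebraMap ℝ ℂ)) ∘ (fun z => (X : Polynomial ℝ) - C z.re)) z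
        = (fun a => (X : Polynomial ℂ) - C a) z := by
      intro z hz
      simp only [Function.comp_apply, Polynomial.map_sub, Polynomial.map_X, Polynomial.map_C]
      congr 1
      congr 1
      have : ((z.re : ℝ) : ℂ) = z := by
        apply Complex.ext
        · simp
        · simp [hroots_real z hz]
      exact this
    rw [Multiset.map_congr rfl hcongr]
    exact (hsplits.eq_prod_roots_of_monic hmon).symm
  have hmonPr : Pr.Monic := by
    apply Polynomial.monic_multiset_prod_of_monic
    intro z _
    exact Polynomial.monic_X_sub_C _
  refine ⟨Pr, hmap, hmonPr, ?_⟩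
  have := hmonPr.natDegree_map (algebraMap ℝ ℂ)
  rw [hmap, hdeg] at this
  exact this.symm

/-- The master package. -/
theorem package (hk : 0 < k) (hm : 0 < m) (A : Matrix (Fin k × Fin m) (Fin k × Fin m) ℂ)
    (hA : A.IsHermitian) (v : Fin k × Fin m → ℂ) (hv : v ≠ 0) :
    ∃ (Pr Φr : Polynomial ℝ),
      Pr.Monic ∧ Pr.natDegree = m
      ∧ Φr.natDegree < m ∧ 0 < Φr.coeff (m-1)
      ∧ Φr.natDegree = m - 1
      ∧ (∀ t : ℝ, ∃ R : Multiset ℝ, Multiset.card R = m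
          ∧ (Pr - C t * Φr) = (R.map (fun μ => (X : Polynomial ℝ) - C μ)).prod
          ∧ (∀ x : ℝ, ((psiCharPoly k m
              (A + (t:ℂ) • Matrix.vecMulVec v (star v))).eval (x:ℂ) = 0 ↔ x ∈ R))) := by
  obtain ⟨Pr, hPmap, hPmon, hPdeg⟩ := exists_real_psi hk A hA
  have hA1 : (A + Matrix.vecMulVec v (star v)).IsHermitian := by
    have := At_herm A hA v 1
    rwa [Complex.ofReal_one, one_smul] at this
  obtain ⟨Qr, hQmap, hQmon, hQdeg⟩ := exists_real_psi hk (A + Matrix.vecMulVec v (star v)) hA1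
  set Φr : Polynomial ℝ := Pr - Qr with hΦr
  have hinj : Function.Injective (algebraMap ℝ ℂ) := (algebraMap ℝ ℂ).injective
  -- coefficient of Φr
  have hnormsq_pos : 0 < (∑ p, Complex.normSq (v p)) / k := by
    apply div_pos
    · have : ∃ p, v p ≠ 0 := by
        by_contra h
        push_neg at h
        exact hv (funext h)
      obtain ⟨p, hp⟩ := this
      apply Finset.sum_pos' (fun q _ => Complex.normSq_nonneg _)
      exact ⟨p, Finset.mem_univ p, Complex.normSq_pos.mpr hp⟩
    · exact_mod_cast hk
  have hΦcoeff : Φr.coeff (m-1) = (∑ p, Complex.normSq (v p)) / k := by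
    have hcs := psi_coeff_sub hk hm A v
    rw [← hPmap, ← hQmap, ← Polynomial.map_sub] at hcs
    rw [Polynomial.coeff_map] at hcs
    have halg : ∀ r : ℝ, algebraMap ℝ ℂ r = (r : ℂ) := fun r => rfl
    rw [halg] at hcs
    exact_mod_cast hcs
  have hΦdeglt : Φr.natDegree < m := by
    rw [hΦr]
    by_cases h0 : Pr - Qr = 0
    · rw [h0, Polynomial.natDegree_zero]; omega
    · have hdPQ : Pr.degree = Qr.degree := by
        rw [Polynomial.degree_eq_natDegree hPmon.ne_zero,
          Polynomial.degree_eq_natDegree hQmon.ne_zero, hPdeg, hQdeg]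
      have hdlt : (Pr - Qr).degree < Pr.degree :=
        Polynomial.degree_sub_lt hdPQ hPmon.ne_zero
          (by rw [hPmon.leadingCoeff, hQmon.leadingCoeff])
      have hnd := Polynomial.natDegree_lt_natDegree h0 hdlt
      omega
  have hΦcoeffpos : 0 < Φr.coeff (m-1) := by rw [hΦcoeff]; exact hnormsq_pos
  have hΦdeg : Φr.natDegree = m - 1 := by
    have h1 := Polynomial.le_natDegree_of_ne_zero (ne_of_gt hΦcoeffpos)
    omega
  refine ⟨Pr, Φr, hPmon, hPdeg, hΦdeglt, hΦcoeffpos, hΦdeg, ?_⟩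
  intro t
  set ψt := psiCharPoly k m (A + (t:ℂ) • Matrix.vecMulVec v (star v)) with hψt
  have hψmon : ψt.Monic := (psi_monic hk _).1
  have hψdeg : ψt.natDegree = m := (psi_monic hk _).2
  set pt : Polynomial ℝ := Pr - C t * Φr with hpt
  have halg : ∀ r : ℝ, algebraMap ℝ ℂ r = (r : ℂ) := fun r => rfl
  have hptmap : pt.map (algebraMap ℝ ℂ) = ψt := by
    rw [hpt, Polynomial.map_sub, Polynomial.map_mul, Polynomial.map_C, hΦr,
      Polynomial.map_sub, hPmap, hQmap]
    rw [hψt, psi_affine hk A v (t:ℂ)]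
    rw [Polynomial.smul_eq_C_mul, halg]
    ring
  have hψsplits : Splits ψt :=
    IsAlgClosed.splits ψt
  have hψherm := At_herm A hA v t
  have hroots_real : ∀ z ∈ ψt.roots, z.im = 0 := by
    intro z hz
    by_contra him
    exact psi_eval_ne_zero hk _ hψherm z him ((Polynomial.mem_roots hψmon.ne_zero).mp hz)
  set R : Multiset ℝ := ψt.roots.map Complex.re with hR
  have hcard : Multiset.card R = m := by
    rw [hR, Multiset.card_map, Polynomial.splits_iff_card_roots.mp hψsplits, hψdeg]
  have hfac : pt = (R.map (fun μ => (X : Polynomial ℝ) - C μ)).prod := by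
    apply Polynomial.map_injective (algebraMap ℝ ℂ) hinj
    rw [hptmap, Polynomial.map_multiset_prod, hR, Multiset.map_map, Multiset.map_map]
    have hcongr : ∀ z ∈ ψt.roots,
        (((Polynomial.map (algebraMap ℝ ℂ)) ∘ (fun μ : ℝ => (X : Polynomial ℝ) - C μ)) ∘ Complex.re) z
        = (fun a : ℂ => (X : Polynomial ℂ) - C a) z := by
      intro z hz
      simp only [Function.comp_apply, Polynomial.map_sub, Polynomial.map_X, Polynomial.map_C]
      congr 1
      congr 1
      · rw [halg]
        apply Complex.ext
        · simp
        · simp [hroots_real z hz]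
    rw [Multiset.map_congr rfl hcongr]
    exact hψsplits.eq_prod_roots_of_monic hψmon
  refine ⟨R, hcard, hfac, ?_⟩
  intro x
  have heval : ψt.eval (x:ℂ) = ((pt.eval x : ℝ) : ℂ) := by
    rw [← hptmap, Polynomial.eval_map, ← halg x, Polynomial.eval₂_at_apply, halg]
  rw [heval, Complex.ofReal_eq_zero]
  rw [hfac, Polynomial.eval_multiset_prod, Multiset.map_map]
  have hmapeq : R.map ((Polynomial.eval x) ∘ (fun μ : ℝ => (X : Polynomial ℝ) - C μ))
      = R.map (fun μ : ℝ => x - μ) := by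
    apply Multiset.map_congr rfl
    intro μ _
    simp
  rw [hmapeq, Multiset.prod_eq_zero_iff]
  constructor
  · intro h0
    obtain ⟨μ, hμ, hμ0⟩ := Multiset.mem_map.mp h0
    rw [sub_eq_zero] at hμ0
    rwa [← hμ0] at hμ
  · intro hx
    rw [Multiset.mem_map]
    exact ⟨x, hx, sub_self x⟩


lemma prod_ge_pow (s : Multiset ℝ) (ε : ℝ) (hε : 0 < ε) (h : ∀ a ∈ s, ε ≤ a) :
    ε ^ Multiset.card s ≤ s.prod := by
  induction s using Multiset.induction_on with
  | empty => simp
  | cons a t ih =>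
    rw [Multiset.prod_cons, Multiset.card_cons, pow_succ, mul_comm (ε ^ Multiset.card t) ε]
    have ha : ε ≤ a := h a (Multiset.mem_cons_self a t)
    have ht : ε ^ Multiset.card t ≤ t.prod := ih (fun b hb => h b (Multiset.mem_cons_of_mem hb))
    have hεpow : (0:ℝ) ≤ ε ^ Multiset.card t := le_of_lt (pow_pos hε _)
    nlinarith

lemma multiset_prod_pos (s : Multiset ℝ) (h : ∀ a ∈ s, 0 < a) : 0 < s.prod := by
  induction s using Multiset.induction_on with
  | empty => simp
  | cons a t ih =>
    rw [Multiset.prod_cons]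
    have ha := h a (Multiset.mem_cons_self a t)
    have ht := ih (fun b hb => h b (Multiset.mem_cons_of_mem hb))
    positivity

lemma root_bound {m : ℕ} (hm : 0 < m) (p : Polynomial ℝ) (hmon : p.Monic)
    (hdeg : p.natDegree = m) (x : ℝ) (hx : p.eval x = 0) :
    |x| ≤ max 1 (∑ i ∈ Finset.range m, |p.coeff i|) := by
  by_cases h1 : |x| ≤ 1
  · exact le_trans h1 (le_max_left _ _)
  push_neg at h1
  have heval := Polynomial.eval_eq_sum_range' (p := p) (n := m + 1) (by omega) x
  rw [hx] at heval
  rw [Finset.sum_range_succ] at heval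
  have hcm : p.coeff m = 1 := by
    have := hmon.coeff_natDegree
    rwa [hdeg] at this
  rw [hcm, one_mul] at heval
  have hxm : x ^ m = -∑ i ∈ Finset.range m, p.coeff i * x ^ i := by linarith [heval.symm]
  have habs : |x| ^ m ≤ (∑ i ∈ Finset.range m, |p.coeff i|) * |x| ^ (m - 1) := by
    calc |x| ^ m = |x ^ m| := (abs_pow x m).symm
      _ = |∑ i ∈ Finset.range m, p.coeff i * x ^ i| := by rw [hxm, abs_neg]
      _ ≤ ∑ i ∈ Finset.range m, |p.coeff i * x ^ i| := Finset.abs_sum_le_sum_abs _ _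
      _ ≤ ∑ i ∈ Finset.range m, |p.coeff i| * |x| ^ (m - 1) := by
          apply Finset.sum_le_sum
          intro i hi
          rw [abs_mul, abs_pow]
          apply mul_le_mul_of_nonneg_left _ (abs_nonneg _)
          apply pow_le_pow_right₀ (le_of_lt h1)
          rw [Finset.mem_range] at hi
          omega
      _ = (∑ i ∈ Finset.range m, |p.coeff i|) * |x| ^ (m - 1) := by
          rw [Finset.sum_mul]
  have hxpow : |x| ^ m = |x| * |x| ^ (m - 1) := by
    rw [← pow_succ']
    congr 1
    omega
  rw [hxpow] at habs
  have hpowpos : 0 < |x| ^ (m - 1) := pow_pos (lt_trans zero_lt_one h1) _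
  have : |x| ≤ ∑ i ∈ Finset.range m, |p.coeff i| := le_of_mul_le_mul_right habs hpowpos
  exact le_trans this (le_max_right _ _)

theorem analysis (m : ℕ) (hm : 0 < m) (Pr Φr : Polynomial ℝ)
    (hPmon : Pr.Monic) (hPdeg : Pr.natDegree = m)
    (hΦdeg : Φr.natDegree = m - 1) (hΦlt : Φr.natDegree < m)
    (hΦpos : 0 < Φr.coeff (m-1))
    (R : ℝ → Multiset ℝ) (hcard : ∀ t, Multiset.card (R t) = m)
    (hfac : ∀ t, Pr - C t * Φr = ((R t).map (fun μ => (X : Polynomial ℝ) - C μ)).prod) :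
    Continuous (fun t => sSup {x | x ∈ R t}) ∧ Monotone (fun t => sSup {x | x ∈ R t}) := by
  classical
  set pt : ℝ → Polynomial ℝ := fun t => Pr - C t * Φr with hptdef
  set rfun : ℝ → ℝ := fun t => sSup {x | x ∈ R t} with hrfun
  have hevalprod : ∀ t x, (pt t).eval x = ((R t).map (fun μ => x - μ)).prod := by
    intro t x
    show (Pr - C t * Φr).eval x = _
    rw [hfac t, Polynomial.eval_multiset_prod, Multiset.map_map]
    congr 1
    apply Multiset.map_congr rfl
    intro μ _
    simp
  have hrootiff : ∀ t x, (pt t).eval x = 0 ↔ x ∈ R t := by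
    intro t x
    rw [hevalprod, Multiset.prod_eq_zero_iff]
    constructor
    · intro h0
      obtain ⟨μ, hμ, hμ0⟩ := Multiset.mem_map.mp h0
      rw [sub_eq_zero] at hμ0
      rwa [← hμ0] at hμ
    · intro hx
      exact Multiset.mem_map.mpr ⟨x, hx, sub_self x⟩
  have hSfin : ∀ t, {x | x ∈ R t}.Finite := by
    intro t
    have : {x | x ∈ R t} = ↑(R t).toFinset := by
      ext x; simp [Multiset.mem_toFinset]
    rw [this]
    exact (R t).toFinset.finite_toSet
  have hSne : ∀ t, {x : ℝ | x ∈ R t}.Nonempty := by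
    intro t
    obtain ⟨a, ha⟩ := Multiset.card_pos_iff_exists_mem.mp (by rw [hcard t]; omega)
    exact ⟨a, ha⟩
  have hrmem : ∀ t, rfun t ∈ R t := fun t => (hSne t).csSup_mem (hSfin t)
  have hrub : ∀ t, ∀ μ ∈ R t, μ ≤ rfun t := fun t μ hμ =>
    le_csSup ((hSfin t).bddAbove) hμ
  have hroot : ∀ t, (pt t).eval (rfun t) = 0 := fun t => (hrootiff t _).mpr (hrmem t)
  have hdiff : ∀ t s x, (pt s).eval x = (pt t).eval x + (t - s) * Φr.eval x := by
    intro t s x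
    show (Pr - C s * Φr).eval x = (Pr - C t * Φr).eval x + (t - s) * Φr.eval x
    simp only [Polynomial.eval_sub, Polynomial.eval_mul, Polynomial.eval_C]
    ring
  have hposgt : ∀ t x, rfun t < x → 0 < (pt t).eval x := by
    intro t x hx
    rw [hevalprod]
    apply multiset_prod_pos
    intro a ha
    obtain ⟨μ, hμ, rfl⟩ := Multiset.mem_map.mp ha
    have := hrub t μ hμ
    linarith
  have hptmon : ∀ s, (pt s).Monic ∧ (pt s).natDegree = m := by
    intro s
    have hdeglt : (C s * Φr).degree < Pr.degree := by
      have h1 : (C s * Φr).degree ≤ Φr.degree := by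
        refine le_trans (Polynomial.degree_mul_le _ _) ?_
        have h0 : (C s : Polynomial ℝ).degree ≤ 0 := Polynomial.degree_C_le
        calc (C s : Polynomial ℝ).degree + Φr.degree ≤ 0 + Φr.degree :=
              add_le_add_left h0 _
          _ = Φr.degree := zero_add _
      have h2 : Φr.degree < Pr.degree := by
        apply lt_of_le_of_lt (Polynomial.degree_le_natDegree)
        rw [Polynomial.degree_eq_natDegree hPmon.ne_zero, hPdeg]
        exact_mod_cast hΦlt
      exact lt_of_le_of_lt h1 h2
    constructor
    · show (Pr - C s * Φr).Monic
      rw [sub_eq_add_neg]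
      apply hPmon.add_of_left
      rwa [Polynomial.degree_neg]
    · have hdegeq : (pt s).degree = Pr.degree := by
        show (Pr - C s * Φr).degree = Pr.degree
        rw [sub_eq_add_neg]
        apply Polynomial.degree_add_eq_left_of_degree_lt
        rwa [Polynomial.degree_neg]
      have : (pt s).degree = (m : WithBot ℕ) := by
        rw [hdegeq, Polynomial.degree_eq_natDegree hPmon.ne_zero, hPdeg]
      exact Polynomial.natDegree_eq_of_degree_eq_some this
  -- local root bounds
  set KK : ℝ → ℝ := fun t0 =>
    max 1 (∑ i ∈ Finset.range m, (|Pr.coeff i| + (|t0|+1) * |Φr.coeff i|)) with hKK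
  have hrboundK : ∀ t0 s, |s - t0| ≤ 1 → ∀ x ∈ R s, |x| ≤ KK t0 := by
    intro t0 s hs x hx
    have hb := root_bound hm (pt s) (hptmon s).1 (hptmon s).2 x ((hrootiff s x).mpr hx)
    refine le_trans hb ?_
    rw [hKK]
    apply max_le_max (le_refl 1)
    apply Finset.sum_le_sum
    intro i _
    show |(Pr - C s * Φr).coeff i| ≤ _
    rw [Polynomial.coeff_sub, Polynomial.coeff_C_mul]
    refine le_trans (abs_sub _ _) ?_
    apply add_le_add (le_refl _)
    rw [abs_mul]
    apply mul_le_mul_of_nonneg_right _ (abs_nonneg _)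
    have h2 : |s| - |t0| ≤ |s - t0| := abs_sub_abs_le_abs_sub s t0
    linarith
  -- eventually positive Φ
  have hΦevpos : ∀ᶠ x in atTop, 0 < Φr.eval x := by
    rcases Nat.eq_zero_or_pos (m - 1) with h0 | hpos1
    · have hΦC : Φr = C (Φr.coeff 0) :=
        Polynomial.eq_C_of_natDegree_eq_zero (by rw [hΦdeg, h0])
      have hc0 : 0 < Φr.coeff 0 := by rw [← h0]; exact hΦpos
      apply Filter.Eventually.of_forall
      intro x
      conv_lhs => rw [show (0:ℝ) = 0 from rfl]
      rw [hΦC, Polynomial.eval_C]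
      exact hc0
    · have hdegpos : 0 < Φr.degree :=
        Polynomial.natDegree_pos_iff_degree_pos.mp (by omega)
      have hlead : 0 ≤ Φr.leadingCoeff := by
        rw [Polynomial.leadingCoeff, hΦdeg]
        exact le_of_lt hΦpos
      exact (Polynomial.tendsto_atTop_of_leadingCoeff_nonneg Φr hdegpos
        hlead).eventually_gt_atTop 0
  -- continuity
  have hcont : Continuous rfun := by
    rw [Metric.continuous_iff]
    intro t0 ε hε
    set ε' : ℝ := min (ε/2) 1 with hε'
    have hε'pos : 0 < ε' := by
      apply lt_min
      · linarith
      · norm_num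
    have hε'le1 : ε' ≤ 1 := min_le_right _ _
    set r0 := rfun t0 with hr0
    have hr0le : r0 ≤ KK t0 := by
      have := hrboundK t0 t0 (by simp) r0 (hrmem t0)
      exact le_trans (le_abs_self _) this
    set J := Set.Icc (r0 + ε') (KK t0 + 1) with hJ
    have hJcomp : IsCompact J := isCompact_Icc
    have hJne : J.Nonempty := by
      rw [hJ]
      apply Set.nonempty_Icc.mpr
      linarith
    obtain ⟨a, haJ, hamin⟩ := hJcomp.exists_isMinOn hJne ((pt t0).continuous.continuousOn)
    set η := (pt t0).eval a with hη
    have hηpos : 0 < η := by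
      apply hposgt t0 a
      have := haJ.1
      rw [hr0] at *
      linarith [haJ.1]
    obtain ⟨b, hbJ, hbmax⟩ := hJcomp.exists_isMaxOn hJne
      ((continuous_abs.comp Φr.continuous).continuousOn)
    set ΦM := |Φr.eval b| with hΦM
    have hΦMnonneg : 0 ≤ ΦM := abs_nonneg _
    set δ : ℝ := min (min (η/(ΦM+1)) (ε'^m/(|Φr.eval r0|+1))) 1 with hδ
    have hδpos : 0 < δ := by
      apply lt_min (lt_min _ _) one_pos
      · positivity
      · positivity
    refine ⟨δ, hδpos, ?_⟩
    intro s hdist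
    rw [Real.dist_eq] at hdist ⊢
    have hs1 : |s - t0| ≤ 1 := le_of_lt (lt_of_lt_of_le hdist (min_le_right _ _))
    have hδ1 : |s - t0| < η/(ΦM+1) :=
      lt_of_lt_of_le hdist (le_trans (min_le_left _ _) (min_le_left _ _))
    have hδ2 : |s - t0| < ε'^m/(|Φr.eval r0|+1) :=
      lt_of_lt_of_le hdist (le_trans (min_le_left _ _) (min_le_right _ _))
    -- upper estimate
    have hupper : ∀ μ ∈ R s, μ ≤ r0 + ε' := by
      intro μ hμ
      by_contra hgt
      push_neg at hgt
      have hμJ : μ ∈ J := by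
        constructor
        · linarith
        · have := hrboundK t0 s hs1 μ hμ
          have h2 := le_abs_self μ
          linarith
      have hμroot : (pt s).eval μ = 0 := (hrootiff s μ).mpr hμ
      have hptμ : (pt s).eval μ = (pt t0).eval μ + (t0 - s) * Φr.eval μ := hdiff t0 s μ
      have hmin : η ≤ (pt t0).eval μ := hamin hμJ
      have hmax : |Φr.eval μ| ≤ ΦM := hbmax hμJ
      have habs : |(t0 - s) * Φr.eval μ| ≤ |s - t0| * ΦM := by
        rw [abs_mul, abs_sub_comm]
        exact mul_le_mul_of_nonneg_left hmax (abs_nonneg _)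
      have hsmall : |s - t0| * ΦM < η := by
        have h3 : |s - t0| * (ΦM + 1) < η := by
          rw [← lt_div_iff₀ (by positivity)]
          exact hδ1
        nlinarith [abs_nonneg (s - t0)]
      have : 0 < (pt s).eval μ := by
        have h4 : -((t0-s) * Φr.eval μ) ≤ |(t0 - s) * Φr.eval μ| := neg_le_abs _
        rw [hptμ]
        linarith
      rw [hμroot] at this
      exact lt_irrefl 0 this
    have hub : rfun s ≤ r0 + ε' := hupper (rfun s) (hrmem s)
    -- lower estimate
    have hlb : r0 - ε' < rfun s := by
      by_contra hle
      push_neg at hle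
      have hall : ∀ a ∈ (R s).map (fun μ => r0 - μ), ε' ≤ a := by
        intro a ha
        obtain ⟨μ, hμ, rfl⟩ := Multiset.mem_map.mp ha
        have := hrub s μ hμ
        linarith
      have hgeq : ε' ^ m ≤ (pt s).eval r0 := by
        rw [hevalprod]
        have := prod_ge_pow _ ε' hε'pos hall
        rwa [Multiset.card_map, hcard s] at this
      have hval : (pt s).eval r0 = (t0 - s) * Φr.eval r0 := by
        rw [hdiff t0 s r0, hroot t0, zero_add]
      have habs2 : |(t0 - s) * Φr.eval r0| < ε'^m := by
        rw [abs_mul, abs_sub_comm]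
        calc |s - t0| * |Φr.eval r0| ≤ |s - t0| * (|Φr.eval r0| + 1) := by
              nlinarith [abs_nonneg (s - t0), abs_nonneg (Φr.eval r0)]
          _ < ε'^m := by
              rw [← lt_div_iff₀ (by positivity)]
              exact hδ2
      have : (pt s).eval r0 < ε'^m := lt_of_le_of_lt (le_abs_self _) (by rwa [hval])
      linarith
    have : |rfun s - r0| ≤ ε' := abs_le.mpr ⟨by linarith, by linarith⟩
    have hε'lt : ε' ≤ ε/2 := min_le_left _ _
    calc |rfun s - rfun t0| = |rfun s - r0| := rfl
      _ ≤ ε' := this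
      _ < ε := by linarith
  refine ⟨hcont, ?_⟩
  -- monotonicity
  intro t1 t2 h12
  by_contra hlt
  push_neg at hlt
  have hΦne : Φr ≠ 0 := by
    intro h
    rw [h, Polynomial.coeff_zero] at hΦpos
    exact lt_irrefl 0 hΦpos
  have hioo : (Set.Ioo (rfun t2) (rfun t1)).Infinite := Set.infinite_coe_iff.mp (Set.Ioo.infinite hlt)
  obtain ⟨x0, hx0⟩ := (hioo.diff (Polynomial.finite_setOf_isRoot hΦne)).nonempty
  obtain ⟨hx0mem, hx0nr⟩ := hx0
  have hΦx0 : Φr.eval x0 ≠ 0 := fun h => hx0nr h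
  have ht12 : t1 < t2 := by
    rcases lt_or_eq_of_le h12 with h | h
    · exact h
    · exfalso
      rw [h] at hlt
      exact lt_irrefl _ hlt
  have hIVT1 := intermediate_value_Icc' (le_of_lt ht12) hcont.continuousOn
  obtain ⟨ts, hts, htseq⟩ := hIVT1 ⟨le_of_lt hx0mem.1, le_of_lt hx0mem.2⟩
  have htsroot : Pr.eval x0 = ts * Φr.eval x0 := by
    have h5 := hroot ts
    rw [htseq] at h5
    have h2 : (Pr - C ts * Φr).eval x0 = 0 := h5
    simp only [Polynomial.eval_sub, Polynomial.eval_mul, Polynomial.eval_C] at h2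
    linarith
  obtain ⟨x1, hx1, hx1pos⟩ := ((eventually_gt_atTop x0).and hΦevpos).exists
  set T := max (t2+1) (Pr.eval x1 / Φr.eval x1 + 1) with hT
  have hT2 : t2 < T := lt_of_lt_of_le (lt_add_one t2) (le_max_left _ _)
  have hx1neg : (pt T).eval x1 < 0 := by
    show (Pr - C T * Φr).eval x1 < 0
    simp only [Polynomial.eval_sub, Polynomial.eval_mul, Polynomial.eval_C]
    have hTgt : Pr.eval x1 / Φr.eval x1 < T :=
      lt_of_lt_of_le (lt_add_one _) (le_max_right _ _)
    rw [div_lt_iff₀ hx1pos] at hTgt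
    linarith
  have hptev : ∀ᶠ x in atTop, 0 < (pt T).eval x := by
    have hdegpos : 0 < (pt T).degree :=
      Polynomial.natDegree_pos_iff_degree_pos.mp (by rw [(hptmon T).2]; omega)
    exact (Polynomial.tendsto_atTop_of_leadingCoeff_nonneg _ hdegpos
      (by rw [(hptmon T).1.leadingCoeff]; norm_num)).eventually_gt_atTop 0
  obtain ⟨x2, hx2gt, hx2pos⟩ := ((eventually_gt_atTop x1).and hptev).exists
  have hIVT2 := intermediate_value_Icc (le_of_lt hx2gt) ((pt T).continuous.continuousOn)
  obtain ⟨ξ, hξIcc, hξ0⟩ := hIVT2 ⟨le_of_lt hx1neg, le_of_lt hx2pos⟩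
  have hξmem : ξ ∈ R T := (hrootiff T ξ).mp hξ0
  have hrT : x0 < rfun T := lt_of_lt_of_le (lt_of_lt_of_le hx1 hξIcc.1) (hrub T ξ hξmem)
  have hIVT3 := intermediate_value_Icc (le_of_lt hT2) hcont.continuousOn
  obtain ⟨tss, htss, htsseq⟩ := hIVT3 ⟨le_of_lt hx0mem.1, le_of_lt hrT⟩
  have htssroot : Pr.eval x0 = tss * Φr.eval x0 := by
    have h5 := hroot tss
    rw [htsseq] at h5
    have h2 : (Pr - C tss * Φr).eval x0 = 0 := h5
    simp only [Polynomial.eval_sub, Polynomial.eval_mul, Polynomial.eval_C] at h2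
    linarith
  have hteq : ts = tss := mul_right_cancel₀ hΦx0 (htsroot.symm.trans htssroot)
  have hts2 : ts = t2 := le_antisymm hts.2 (hteq ▸ htss.1)
  rw [hts2] at htseq
  exact (ne_of_lt hx0mem.1) htseq


end MSS

/-- The map `t ↦ maxroot ψ_{k,m}[A + t·vv*]` is continuous and monotone
nondecreasing. -/
theorem continuous_monotone_maxRoot_rankOne (k m : ℕ) (hk : 0 < k) (hm : 0 < m)
    (A : Matrix (Fin k × Fin m) (Fin k × Fin m) ℂ) (hA : A.IsHermitian)
    (v : Fin k × Fin m → ℂ) (hv : v ≠ 0) :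
    Continuous (fun t : ℝ =>
        maxRoot (psiCharPoly k m (A + (t : ℂ) • Matrix.vecMulVec v (star v)))) ∧
    Monotone (fun t : ℝ =>
        maxRoot (psiCharPoly k m (A + (t : ℂ) • Matrix.vecMulVec v (star v)))) := by
  obtain ⟨Pr, Φr, hPmon, hPdeg, hΦlt, hΦpos, hΦdeg, hper⟩ := MSS.package hk hm A hA v hv
  choose R hcard hfacR hiff using hper
  have hana := MSS.analysis m hm Pr Φr hPmon hPdeg hΦdeg hΦlt hΦpos R hcard hfacR
  have hfeq : (fun t : ℝ =>
      maxRoot (psiCharPoly k m (A + (t : ℂ) • Matrix.vecMulVec v (star v))))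
      = fun t => sSup {x | x ∈ R t} := by
    funext t
    rw [maxRoot]
    congr 1
    ext x
    exact hiff t x
  rw [hfeq]
  exact hana

end MSSProof
end

section
/- For a rank-one positive semidefinite matrix λ·vv* ∈ ℂ^{km×km} with λ ≥ 0 and v a unit vector, the (k,m)-characteristic polynomial is ψ_{k,m}[λ·vv*](x) = x^{m−1}(x − λ/k); in particular its largest root is λ/k. -/
open Polynomial


lemma eval_charpoly' {m : ℕ} (M : Matrix (Fin m) (Fin m) ℂ) (x : ℂ) :
    M.charpoly.eval x = (x • (1 : Matrix (Fin m) (Fin m) ℂ) - M).det := by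
  rw [Matrix.charpoly, ← Polynomial.coe_evalRingHom, RingHom.map_det]
  congr 1
  ext i j
  by_cases h : i = j <;>
    simp [h, Matrix.charmatrix_apply, Matrix.map_apply, Matrix.one_apply,
      Matrix.diagonal_apply]

lemma charpoly_rankOne {m : ℕ} (hm : 0 < m) (c : ℂ) (w : Fin m → ℂ) :
    (c • Matrix.vecMulVec w (star w)).charpoly
      = X ^ m - C (c * dotProduct (star w) w) * X ^ (m - 1) := by
  obtain ⟨n, rfl⟩ : ∃ n, m = n + 1 := ⟨m - 1, (Nat.succ_pred_eq_of_pos hm).symm⟩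
  apply Polynomial.eq_of_infinite_eval_eq
  have hinf : ({x : ℂ | x ≠ 0}).Infinite := by
    simpa [Set.compl_def] using (Set.finite_singleton (0:ℂ)).infinite_compl
  refine hinf.mono fun x hx => ?_
  have hx : x ≠ 0 := hx
  show eval x _ = eval x _
  rw [eval_charpoly']
  have key : x • (1 : Matrix (Fin (n+1)) (Fin (n+1)) ℂ) - c • Matrix.vecMulVec w (star w)
      = x • ((1 : Matrix (Fin (n+1)) (Fin (n+1)) ℂ)
          + Matrix.replicateCol Unit ((-(c/x)) • w) * Matrix.replicateRow Unit (star w)) := by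
    rw [← Matrix.vecMulVec_eq Unit]
    ext i j
    by_cases h : i = j <;>
      (simp [h, Matrix.one_apply, Matrix.vecMulVec_apply, sub_eq_add_neg, mul_add]
       <;> field_simp <;> ring)
  rw [key, Matrix.det_smul, Matrix.det_one_add_replicateCol_mul_replicateRow]
  have hdot : dotProduct (star w) ((-(c/x)) • w)
      = (-(c/x)) * dotProduct (star w) w := by
    simp [dotProduct, Finset.mul_sum, mul_comm, mul_left_comm, mul_assoc]
  rw [hdot]
  simp only [eval_sub, eval_mul, eval_pow, eval_X, eval_C, Fintype.card_fin, Nat.add_sub_cancel]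
  field_simp
  ring

/-- For a rank-one PSD matrix `λ·vv*` with `λ ≥ 0` and `v` a unit vector,
`ψ_{k,m}[λ·vv*](x) = x^{m−1}(x − λ/k)`; in particular the largest root is `λ/k`. -/
theorem psiCharPoly_rankOne (k m : ℕ) (hk : 0 < k) (hm : 0 < m)
    (lam : ℝ) (hlam : 0 ≤ lam)
    (v : Fin k × Fin m → ℂ)
    (hv : dotProduct (star v) v = 1) :
    psiCharPoly k m ((lam : ℂ) • Matrix.vecMulVec v (star v))
        = Polynomial.X ^ (m - 1) * (Polynomial.X - Polynomial.C ((lam : ℂ) / k)) ∧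
      maxRoot (psiCharPoly k m ((lam : ℂ) • Matrix.vecMulVec v (star v)))
        = lam / k := by
  have hk0 : (k : ℂ) ≠ 0 := Nat.cast_ne_zero.mpr hk.ne'
  obtain ⟨n, rfl⟩ : ∃ n, m = n + 1 := ⟨m - 1, (Nat.succ_pred_eq_of_pos hm).symm⟩
  have hpoly : psiCharPoly k (n + 1) ((lam : ℂ) • Matrix.vecMulVec v (star v))
      = X ^ n * (X - C ((lam : ℂ) / k)) := by
    unfold psiCharPoly
    have hsub : ∀ g : Fin (n+1) → Fin k,
        (((lam:ℂ) • Matrix.vecMulVec v (star v)).submatrix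
          (fun i : Fin (n+1) => (g i, i)) (fun i : Fin (n+1) => (g i, i))).charpoly
        = X ^ (n+1) - C ((lam:ℂ) * ∑ i : Fin (n+1), star (v (g i, i)) * v (g i, i)) * X ^ n := by
      intro g
      have h1 : (((lam:ℂ) • Matrix.vecMulVec v (star v)).submatrix
          (fun i : Fin (n+1) => (g i, i)) (fun i : Fin (n+1) => (g i, i)))
          = (lam:ℂ) • Matrix.vecMulVec (fun i => v (g i, i))
              (star fun i : Fin (n+1) => v (g i, i)) := by
        ext i j; simp [Matrix.vecMulVec_apply]
      rw [h1, charpoly_rankOne hm]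
      simp [dotProduct]
    simp_rw [hsub]
    have step : ∀ i : Fin (n+1), ∑ g : Fin (n+1) → Fin k, star (v (g i, i)) * v (g i, i)
        = (k:ℂ)^n * ∑ j : Fin k, star (v (j, i)) * v (j, i) := by
      intro i
      have e1 : ∑ g : Fin (n+1) → Fin k, star (v (g i, i)) * v (g i, i)
          = ∑ p : Fin k × ({j : Fin (n+1) // j ≠ i} → Fin k), star (v (p.1, i)) * v (p.1, i) :=
        Fintype.sum_equiv (Equiv.funSplitAt i (Fin k)) _ _ (fun g => rfl)
      rw [e1, Fintype.sum_prod_type]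
      have hcard : Fintype.card ({j : Fin (n+1) // j ≠ i} → Fin k) = k ^ n := by
        have h3 : Fintype.card {j : Fin (n+1) // j ≠ i} = n := by
          simp [Fintype.card_subtype_compl]
        rw [Fintype.card_fun, Fintype.card_fin, h3]
      simp only [Finset.sum_const, Finset.card_univ, hcard, nsmul_eq_mul, Finset.mul_sum]
      push_cast
      ring
    have hsum : ∑ g : Fin (n+1) → Fin k,
        ((lam:ℂ) * ∑ i : Fin (n+1), star (v (g i, i)) * v (g i, i))
        = (k:ℂ) ^ (n+1) * ((lam:ℂ) / k) := by
      rw [← Finset.mul_sum, Finset.sum_comm]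
      simp_rw [step]
      rw [← Finset.mul_sum]
      have hv2 : ∑ p : Fin k × Fin (n+1), star (v p) * v p = 1 := by
        simpa [dotProduct] using hv
      rw [Fintype.sum_prod_type] at hv2
      rw [Finset.sum_comm, hv2]
      field_simp
      ring
    rw [Finset.sum_sub_distrib, Finset.sum_const, ← Finset.sum_mul, ← map_sum, hsum,
      Finset.card_univ, Fintype.card_fun, Fintype.card_fin, Fintype.card_fin]
    rw [nsmul_eq_mul, Polynomial.smul_eq_C_mul]
    have hC : ((k^(n+1) : ℕ) : ℂ[X]) = C ((k:ℂ)^(n+1)) := by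
      rw [← Nat.cast_pow, C_eq_natCast]
    have h2 : ((k:ℂ)^(n+1))⁻¹ * ((k:ℂ)^(n+1) * ((lam:ℂ)/k)) = (lam:ℂ)/k := by
      field_simp
    rw [hC, mul_sub, ← mul_assoc, ← C_mul, inv_mul_cancel₀ (pow_ne_zero _ hk0), C_1, one_mul,
      ← mul_assoc, ← C_mul, h2, pow_succ]
    ring
  refine ⟨hpoly, ?_⟩
  have hkR : (0:ℝ) ≤ lam / k := div_nonneg hlam (Nat.cast_nonneg k)
  have hcast : ((lam / k : ℝ) : ℂ) = (lam:ℂ)/(k:ℂ) := by push_cast; ring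
  unfold maxRoot
  simp only [hpoly]
  have key : ∀ x : ℝ, ((x:ℂ) = (lam:ℂ)/(k:ℂ)) ↔ x = lam / k := by
    intro x; rw [← hcast, Complex.ofReal_inj]
  cases n with
  | zero =>
    have hset : {x : ℝ | eval (x:ℂ) (X ^ 0 * (X - C ((lam:ℂ)/k))) = 0} = {lam / k} := by
      ext x
      simp only [Set.mem_setOf_eq, pow_zero, one_mul, eval_sub, eval_X, eval_C,
        sub_eq_zero, key, Set.mem_singleton_iff]
    rw [hset, csSup_singleton]
  | succ n' =>
    have hset : {x : ℝ | eval (x:ℂ) (X ^ (n'+1) * (X - C ((lam:ℂ)/k))) = 0}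
        = {0, lam / k} := by
      ext x
      simp only [Set.mem_setOf_eq, eval_mul, eval_pow, eval_X, eval_sub, eval_C,
        mul_eq_zero, pow_eq_zero_iff (Nat.succ_ne_zero n'), Complex.ofReal_eq_zero,
        sub_eq_zero, key, Set.mem_insert_iff, Set.mem_singleton_iff]
    rw [hset, csSup_pair, sup_eq_right.mpr hkR]
end
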